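/- arXiv:0905.1898 — 6 statements merged into one kernel-verified Lean document; each statement's English description precedes it below -/
import Mathlib

section
/- Let G be a finite group which is not cyclic. Then G has a subgroup which is not characteristic: there exist a subgroup H ≤ G and a group automorphism φ ∈ Aut(G) such that φ(H) ≠ H. -/
open Subgroup

-- pairwise coprime prod dvd
lemma nat_prod_dvd {ι : Type*} [Fintype ι] (f : ι → ℕ) (d : ℕ)
    (hcop : ∀ i j, i ≠ j → Nat.Coprime (f i) (f j)) (hdvd : ∀ i, f i ∣ d) :
    (∏ i, f i) ∣ d := by
  classical
  have H : ∀ s : Finset ι, (∏ i ∈ s, f i) ∣ d := by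
    intro s
    induction s using Finset.induction with
    | empty => simpa using ⟨d, rfl⟩
    | @insert a s hx ih =>
      rw [Finset.prod_insert hx]
      refine Nat.Coprime.mul_dvd_of_dvd_of_dvd ?_ (hdvd a) ih
      exact Nat.Coprime.prod_right fun i hi => hcop a i (by rintro rfl; exact hx hi)
  exact H Finset.univ

lemma pi_zmod_cyclic {ι : Type} [Fintype ι] (n : ι → ℕ) (h0 : ∀ i, n i ≠ 0)
    (hcop : ∀ i j, i ≠ j → Nat.Coprime (n i) (n j)) :
    IsAddCyclic (∀ i, ZMod (n i)) := by
  have : ∀ i, NeZero (n i) := fun i => ⟨h0 i⟩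
  have : Finite (∀ i, ZMod (n i)) := by
    have : ∀ i, Finite (ZMod (n i)) := fun i => by
      haveI : NeZero (n i) := ⟨h0 i⟩; infer_instance
    exact Pi.finite
  set g : ∀ i, ZMod (n i) := fun i => 1 with hg
  refine isAddCyclic_of_addOrderOf_eq_card g ?_
  have hdvd : ∀ i, n i ∣ addOrderOf g := by
    intro i
    have := addOrderOf_map_dvd (Pi.evalAddMonoidHom (fun i => ZMod (n i)) i) g
    simpa [g, ZMod.addOrderOf_one] using this
  have h1 : (∏ i, n i) ∣ addOrderOf g := nat_prod_dvd n _ hcop hdvd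
  have h2 : addOrderOf g ∣ Nat.card (∀ i, ZMod (n i)) := addOrderOf_dvd_natCard g
  have h3 : Nat.card (∀ i, ZMod (n i)) = ∏ i, n i := by
    rw [Nat.card_pi]; simp [Nat.card_zmod]
  exact Nat.dvd_antisymm h2 (h3 ▸ h1)

lemma abelian_case {G : Type*} [CommGroup G] [Finite G] (hG : ¬IsCyclic G) :
    ∃ (H : Subgroup G) (φ : MulAut G), H.map φ.toMonoidHom ≠ H := by
  classical
  obtain ⟨ι, hfin, p, hp, e, ⟨E0⟩⟩ := AddCommGroup.equiv_directSum_zmod_of_finite (Additive G)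
  let E : Additive G ≃+ ∀ k, ZMod (p k ^ e k) := E0.trans (DirectSum.addEquivProd _)
  by_cases hinj : ∀ i j, i ≠ j → e i ≠ 0 → e j ≠ 0 → p i ≠ p j
  · exfalso
    apply hG
    have hcyc : IsAddCyclic (∀ k, ZMod (p k ^ e k)) := by
      refine pi_zmod_cyclic _ (fun i => pow_ne_zero _ (hp i).pos.ne') ?_
      intro i j hij
      by_cases hei : e i = 0
      · simp [hei]
      by_cases hej : e j = 0
      · simp [hej]
      · exact Nat.Coprime.pow _ _ ((Nat.coprime_primes (hp i) (hp j)).mpr (hinj i j hij hei hej))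
    have : IsAddCyclic (Additive G) :=
      isAddCyclic_of_surjective E.symm.toAddMonoidHom E.symm.surjective
    exact isAddCyclic_additive_iff.mp this
  · push_neg at hinj
    obtain ⟨i0, j0, hij0, hei0, hej0, hpeq0⟩ := hinj
    obtain ⟨i, j, hij, hei, hej, hpeq, hle⟩ :
        ∃ i j, i ≠ j ∧ e i ≠ 0 ∧ e j ≠ 0 ∧ p i = p j ∧ e i ≤ e j := by
      rcases le_total (e i0) (e j0) with h | h
      · exact ⟨i0, j0, hij0, hei0, hej0, hpeq0, h⟩
      · exact ⟨j0, i0, hij0.symm, hej0, hei0, hpeq0.symm, h⟩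
    set c : ZMod (p j ^ e j) := ((p j ^ (e j - e i) : ℕ) : ZMod (p j ^ e j)) with hc_def
    have hc : c ≠ 0 := by
      rw [hc_def, Ne, ZMod.natCast_eq_zero_iff]
      intro hdvd
      have := Nat.le_of_dvd (pow_pos (hp j).pos _) hdvd
      have h2 := Nat.pow_lt_pow_right (hp j).one_lt (show e j - e i < e j by omega)
      omega
    have key : (zmultiplesHom _ c) ((p i ^ e i : ℕ) : ℤ) = 0 := by
      have hee : e i + (e j - e i) = e j := by omega
      rw [zmultiplesHom_apply, natCast_zsmul, nsmul_eq_mul, hc_def, hpeq, ← Nat.cast_mul,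
        ← pow_add, hee, ZMod.natCast_self]
    let f : ZMod (p i ^ e i) →+ ZMod (p j ^ e j) := ZMod.lift _ ⟨zmultiplesHom _ c, key⟩
    have hf1 : f (1 : ZMod (p i ^ e i)) = c := by
      have h1 : (1 : ZMod (p i ^ e i)) = ((1 : ℤ) : ZMod (p i ^ e i)) := by norm_num
      rw [h1]
      rw [show f ((1 : ℤ) : ZMod (p i ^ e i)) = (zmultiplesHom _ c) (1 : ℤ) from
        ZMod.lift_coe _ _ 1]
      simp
    have hTi : ∀ x : ∀ k, ZMod (p k ^ e k), (x + Pi.single (M := fun k => ZMod (p k ^ e k)) j (f (x i))) i = x i := by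
      intro x; simp [Pi.single_eq_of_ne hij]
    have hSi : ∀ x : ∀ k, ZMod (p k ^ e k), (x - Pi.single (M := fun k => ZMod (p k ^ e k)) j (f (x i))) i = x i := by
      intro x; simp [Pi.single_eq_of_ne hij]
    let ψ : (∀ k, ZMod (p k ^ e k)) ≃+ (∀ k, ZMod (p k ^ e k)) :=
      { toFun := fun x => x + Pi.single (M := fun k => ZMod (p k ^ e k)) j (f (x i))
        invFun := fun x => x - Pi.single (M := fun k => ZMod (p k ^ e k)) j (f (x i))
        left_inv := by
          intro x
          show (x + Pi.single (M := fun k => ZMod (p k ^ e k)) j (f (x i))) - Pi.single (M := fun k => ZMod (p k ^ e k)) j (f ((x + Pi.single (M := fun k => ZMod (p k ^ e k)) j (f (x i))) i)) = x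
          rw [hTi]; abel
        right_inv := by
          intro x
          show (x - Pi.single (M := fun k => ZMod (p k ^ e k)) j (f (x i))) + Pi.single (M := fun k => ZMod (p k ^ e k)) j (f ((x - Pi.single (M := fun k => ZMod (p k ^ e k)) j (f (x i))) i)) = x
          rw [hSi]; abel
        map_add' := by
          intro x y
          show (x + y) + Pi.single (M := fun k => ZMod (p k ^ e k)) j (f ((x + y) i)) = _ + _
          simp only [Pi.add_apply, map_add, Pi.single_add]
          abel }
    have hψ : ∀ x : ∀ k, ZMod (p k ^ e k), ψ x = x + Pi.single (M := fun k => ZMod (p k ^ e k)) j (f (x i)) := fun _ => rfl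
    let ψ' : Additive G ≃+ Additive G := (E.trans ψ).trans E.symm
    let φ : MulAut G := MulEquiv.toAdditive.symm ψ'
    set v : Additive G := E.symm (Pi.single i 1) with hv
    let u : G := Additive.toMul v
    refine ⟨Subgroup.zpowers u, φ, ?_⟩
    intro hEq
    have hu : φ u ∈ Subgroup.zpowers u := by
      rw [← hEq]
      exact Subgroup.mem_map_of_mem _ (Subgroup.mem_zpowers u)
    obtain ⟨k, hk⟩ := Subgroup.mem_zpowers_iff.mp hu
    have htoAdd : Additive.ofMul (φ u) = ψ' v := rfl
    have hL : E (Additive.ofMul (u ^ k)) = k • Pi.single i (1 : ZMod (p i ^ e i)) := by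
      have h2 : Additive.ofMul (u ^ k) = k • v := by
        simp [u]
      rw [h2, map_zsmul, hv, AddEquiv.apply_symm_apply]
    have hR : E (ψ' v) = Pi.single i 1 + Pi.single j c := by
      have h3 : ψ' v = E.symm (ψ (Pi.single i 1)) := by
        simp [ψ', hv]
      rw [h3, AddEquiv.apply_symm_apply, hψ]
      congr 1
      rw [Pi.single_eq_same, hf1]
    have hfin := congrArg (fun z => E (Additive.ofMul z) j) hk
    simp only [hL, htoAdd, hR] at hfin
    rw [Pi.smul_apply, Pi.add_apply, Pi.single_eq_of_ne hij.symm, Pi.single_eq_same] at hfin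
    simp only [smul_zero, zero_add] at hfin
    exact hc hfin.symm


open Subgroup

section Ded

variable {G : Type*} [Group G] [Finite G]

lemma exists_natpow {x y : G} (h : y ∈ Subgroup.zpowers x) : ∃ n : ℕ, x ^ n = y := by
  have hx : IsOfFinOrder x := isOfFinOrder_of_finite x
  obtain ⟨n, hn⟩ := hx.mem_powers_iff_mem_zpowers.mpr h
  exact ⟨n, hn⟩

lemma commute_of_mem_zpowers' {x y : G} (h : y ∈ Subgroup.zpowers x) : Commute x y := by
  obtain ⟨k, hk⟩ := Subgroup.mem_zpowers_iff.mp h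
  rw [← hk]
  exact (Commute.refl x).zpow_right k

omit [Finite G] in
lemma kpow {a b c : G} (hconj : b⁻¹ * a * b = a * c) (hca : Commute c a) :
    ∀ j : ℤ, b⁻¹ * a ^ j * b = a ^ j * c ^ j := by
  intro j
  have h := map_zpow (MulAut.conj b⁻¹) a j
  simp only [MulAut.conj_apply, inv_inv] at h
  rw [h, hconj, hca.symm.mul_zpow]

omit [Finite G] in
lemma red_pow {a b c : G} (hconj : b⁻¹ * a * b = a * c) (hca : Commute c a) (hcb : Commute c b) :
    ∀ (K : ℕ) (m : ℤ), (b * a ^ m) ^ K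
      = b ^ K * a ^ (m * K) * c ^ (m * (Nat.choose K 2 : ℤ)) := by
  intro K
  induction K with
  | zero => intro m; simp
  | succ K ih =>
    intro m
    have hmove : ∀ j : ℤ, a ^ j * b = b * a ^ j * c ^ j := by
      intro j
      calc a ^ j * b = b * (b⁻¹ * a ^ j * b) := by group
      _ = b * (a ^ j * c ^ j) := by rw [kpow hconj hca]
      _ = b * a ^ j * c ^ j := by group
    have hcA : ∀ (i j : ℤ), c ^ i * a ^ j = a ^ j * c ^ i := by
      intro i j
      exact ((hca.zpow_left i).zpow_right j).eq
    have hcB : ∀ i : ℤ, c ^ i * b = b * c ^ i := by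
      intro i
      exact (hcb.zpow_left i).eq
    have hcAm : ∀ i : ℤ, c ^ i * a ^ m = a ^ m * c ^ i := fun i => hcA i m
    calc (b * a ^ m) ^ (K+1) = (b * a ^ m) ^ K * (b * a ^ m) := by rw [pow_succ]
    _ = b ^ K * a ^ (m * K) * c ^ (m * (Nat.choose K 2 : ℤ)) * (b * a ^ m) := by rw [ih]
    _ = b ^ K * a ^ (m * K) * (c ^ (m * (Nat.choose K 2 : ℤ)) * b) * a ^ m := by group
    _ = b ^ K * a ^ (m * K) * (b * c ^ (m * (Nat.choose K 2 : ℤ))) * a ^ m := by rw [hcB]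
    _ = b ^ K * (a ^ (m * K) * b) * (c ^ (m * (Nat.choose K 2 : ℤ)) * a ^ m) := by group
    _ = b ^ K * (b * a ^ (m * K) * c ^ (m * K)) * (a ^ m * c ^ (m * (Nat.choose K 2 : ℤ))) := by
        rw [hmove, hcAm]
    _ = (b ^ K * b) * a ^ (m * K) * (c ^ (m * K) * a ^ m) * c ^ (m * (Nat.choose K 2 : ℤ)) := by
        group
    _ = (b ^ K * b) * a ^ (m * K) * (a ^ m * c ^ (m * K)) * c ^ (m * (Nat.choose K 2 : ℤ)) := by
        rw [hcA]
    _ = b ^ (K+1) * (a ^ (m * K) * a ^ m) * (c ^ (m * K) * c ^ (m * (Nat.choose K 2 : ℤ))) := by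
        rw [pow_succ]; group
    _ = b ^ (K+1) * a ^ (m * K + m) * c ^ (m * K + m * (Nat.choose K 2 : ℤ)) := by
        rw [zpow_add, zpow_add]
    _ = b ^ (K+1) * a ^ (m * ((K:ℕ)+1 : ℤ)) * c ^ (m * (Nat.choose (K+1) 2 : ℤ)) := by
        rw [show m * K + m = m * ((K:ℕ)+1 : ℤ) by ring,
          show (Nat.choose (K+1) 2 : ℤ) = (K : ℤ) + (Nat.choose K 2 : ℤ) by
            rw [Nat.choose_succ_succ, Nat.choose_one_right]; push_cast; ring]
        ring_nf
    _ = b ^ (K+1) * a ^ (m * ((K+1 : ℕ) : ℤ)) * c ^ (m * (Nat.choose (K+1) 2 : ℤ)) := by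
        norm_num

omit [Finite G] in
lemma red {a b c : G} {p K : ℕ} (hconj : b⁻¹*a*b = a*c) (hca : Commute c a) (hcb : Commute c b)
    (hcp : c ^ p = 1) (hpT : p ∣ Nat.choose K 2)
    (e0 : ℤ) (hbK : b ^ K = c ^ e0) (d : ℤ) (hdK : (a ^ K) ^ d = c) :
    ∃ m : ℤ, (b * a ^ m) ^ K = 1 := by
  obtain ⟨T', hT'⟩ := hpT
  refine ⟨d * (-e0), ?_⟩
  rw [red_pow hconj hca hcb]
  have h1 : a ^ (d * -e0 * (K:ℤ)) = c ^ (-e0) := by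
    rw [show d * -e0 * (K:ℤ) = (K:ℤ) * d * (-e0) by ring, zpow_mul, zpow_mul, zpow_natCast, hdK]
  have h2 : c ^ (d * -e0 * (Nat.choose K 2 : ℤ)) = 1 := by
    rw [hT']
    push_cast
    rw [show d * -e0 * ((p:ℤ) * T') = (p:ℤ) * (d * -e0 * T') by ring, zpow_mul, zpow_natCast,
      hcp, one_zpow]
  rw [h1, h2, hbK, mul_one, ← zpow_add]
  norm_num

lemma layer {x c : G} {p β : ℕ} (hp : p.Prime) (hx : orderOf x = p ^ β) (hβ : 1 ≤ β)
    (hc : c ∈ Subgroup.zpowers x) (hcord : orderOf c = p) :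
    (∃ e : ℤ, x ^ (p ^ (β - 1)) = c ^ e) ∧ (∃ d : ℤ, (x ^ (p ^ (β - 1))) ^ d = c) := by
  obtain ⟨t, ht⟩ := exists_natpow hc
  set K := p ^ (β - 1) with hK
  have hgcd : Nat.gcd (p ^ β) t = K := by
    have h1 : orderOf (x ^ t) = p := by rw [ht, hcord]
    rw [orderOf_pow, hx] at h1
    have hd : Nat.gcd (p ^ β) t ∣ p ^ β := Nat.gcd_dvd_left _ _
    have h2 := Nat.div_mul_cancel hd
    rw [h1] at h2
    have h3 : p * K = p ^ β := by
      rw [hK, ← pow_succ']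
      congr 1
      omega
    exact Nat.eq_of_mul_eq_mul_left hp.pos (h2.trans h3.symm)
  have hKt : K ∣ t := hgcd ▸ Nat.gcd_dvd_right (p ^ β) t
  set e := t / K with he
  have hte : t = K * e := (Nat.mul_div_cancel' hKt).symm
  have hxKe : (x ^ K) ^ e = c := by rw [← pow_mul, ← hte, ht]
  have hXp : (x ^ K) ^ p = 1 := by
    rw [← pow_mul, hK, ← pow_succ]
    have : β - 1 + 1 = β := by omega
    rw [this, ← hx, pow_orderOf_eq_one]
  constructor
  · have hep : ¬ p ∣ e := by
      intro hpe
      obtain ⟨f, hf⟩ := hpe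
      have hdvd : p ^ β ∣ t := by
        rw [hte, hf, hK, ← mul_assoc, ← pow_succ]
        have : β - 1 + 1 = β := by omega
        rw [this]
        exact Dvd.intro f rfl
      have : p ^ β ∣ K := hgcd ▸ Nat.dvd_gcd dvd_rfl hdvd
      have hle := Nat.le_of_dvd (pow_pos hp.pos _) this
      have := Nat.pow_lt_pow_right hp.one_lt (show β - 1 < β by omega)
      omega
    have hcop : IsCoprime (e : ℤ) (p : ℤ) := by
      rw [Nat.isCoprime_iff_coprime]
      exact (Nat.coprime_comm.mpr ((Nat.Prime.coprime_iff_not_dvd hp).mpr hep))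
    obtain ⟨u, v, huv⟩ := hcop
    refine ⟨u, ?_⟩
    calc x ^ K = (x ^ K) ^ (1:ℤ) := (zpow_one _).symm
    _ = (x ^ K) ^ (u * e + v * p : ℤ) := by rw [huv]
    _ = ((x ^ K) ^ (e:ℤ)) ^ u * ((x ^ K) ^ (p:ℤ)) ^ v := by
        rw [zpow_add, show u * (e:ℤ) = (e:ℤ) * u by ring, show v * (p:ℤ) = (p:ℤ) * v by ring,
          zpow_mul, zpow_mul]
    _ = c ^ u * 1 := by rw [zpow_natCast, zpow_natCast, hxKe, hXp, one_zpow]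
    _ = c ^ u := mul_one _
  · exact ⟨(e:ℤ), by rw [zpow_natCast, hxKe]⟩

lemma strick (hnorm : ∀ x g : G, g * x * g⁻¹ ∈ Subgroup.zpowers x) {a b t : G}
    (hab : a*b ≠ b*a) (ht : t ∈ Subgroup.zpowers a) (htb : b*t = t*b)
    (hs2 : (b*t)*(b*t) = 1) : False := by
  have hta : a*t = t*a := (commute_of_mem_zpowers' ht).eq
  have hs1 : b*t ≠ 1 := by
    intro h
    apply hab
    have hb : b = t⁻¹ := eq_inv_of_mul_eq_one_left h
    have : Commute a b := by rw [hb]; exact (commute_of_mem_zpowers' ht).inv_right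
    exact this.eq
  obtain ⟨k, hk⟩ := Subgroup.mem_zpowers_iff.mp (hnorm (b*t) a)
  have hs2' : (b*t) ^ (2:ℤ) = 1 := by
    rw [show (2:ℤ) = ((2:ℕ):ℤ) from rfl, zpow_natCast, pow_two]
    exact hs2
  have hk2 : (b*t) ^ (k % 2) = a*(b*t)*a⁻¹ := by
    rw [← hk]
    conv_rhs => rw [show k = 2*(k/2) + k%2 from (Int.mul_ediv_add_emod k 2).symm]
    rw [zpow_add, zpow_mul, hs2', one_zpow, one_mul]
  have h0 : 0 ≤ k % 2 := Int.emod_nonneg k (by norm_num)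
  have h3 : k % 2 < 2 := Int.emod_lt_of_pos k (by norm_num)
  set r := k % 2 with hr
  interval_cases r
  · rw [zpow_zero] at hk2
    apply hs1
    calc b*t = a⁻¹ * (a*(b*t)*a⁻¹) * a := by group
    _ = a⁻¹ * 1 * a := by rw [← hk2]
    _ = 1 := by group
  · rw [zpow_one] at hk2
    apply hab
    have h5 : a*(b*t) = (b*t)*a := by
      calc a*(b*t) = (a*(b*t)*a⁻¹)*a := by group
      _ = (b*t)*a := by rw [← hk2]
    have h6 : a*b*t = b*a*t := by
      calc a*b*t = a*(b*t) := by group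
      _ = b*t*a := h5
      _ = b*(t*a) := by group
      _ = b*(a*t) := by rw [← hta]
      _ = b*a*t := by group
    exact mul_right_cancel h6

lemma pdvd_choose_odd {p β : ℕ} (hp : p.Prime) (hodd : p ≠ 2) (hβ : 2 ≤ β) :
    p ∣ Nat.choose (p ^ (β-1)) 2 := by
  set n := p ^ (β-1) with hn
  have hno : Odd n := (hp.odd_of_ne_two hodd).pow
  have h2 : 2 ∣ n - 1 := by
    obtain ⟨j, hj⟩ := hno
    omega
  rw [Nat.choose_two_right, Nat.mul_div_assoc n h2]
  exact Dvd.dvd.mul_right (dvd_pow_self p (by omega : β-1 ≠ 0)) _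

lemma pdvd_choose_two {β : ℕ} (hβ : 3 ≤ β) : 2 ∣ Nat.choose (2 ^ (β-1)) 2 := by
  set n := 2 ^ (β-1) with hn
  have h2n : 2 ∣ n := dvd_pow_self 2 (by omega : β-1 ≠ 0)
  rw [Nat.choose_two_right, mul_comm, Nat.mul_div_assoc (n-1) h2n]
  have hhalf : n / 2 = 2 ^ (β-2) := by
    rw [hn, show β - 1 = (β-2) + 1 by omega, pow_succ, Nat.mul_div_cancel _ (by norm_num)]
  refine Dvd.dvd.mul_left ?_ _
  rw [hhalf]
  exact dvd_pow_self 2 (by omega : β-2 ≠ 0)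

end Ded

section Main
variable {G : Type*} [Group G] [Finite G]

omit [Finite G] in
lemma pow_comm_of {a b c : G} (hconj : b⁻¹*a*b = a*c) (hca : Commute c a) (j : ℕ)
    (hcj : c ^ j = 1) : a^j * b = b * a^j := by
  have hk := kpow hconj hca (j:ℤ)
  rw [zpow_natCast, zpow_natCast, hcj, mul_one] at hk
  calc a^j * b = b * (b⁻¹ * a^j * b) := by group
  _ = b * a^j := by rw [hk]

omit [Finite G] in
lemma cpow_of_dvd {c : G} {p j : ℕ} (hcp : c ^ p = 1) (h : p ∣ j) : c ^ j = 1 := by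
  obtain ⟨k, rfl⟩ := h
  rw [pow_mul, hcp, one_pow]

lemma order_primepow {a b : G} (hab : a*b ≠ b*a)
    (hmin : ∀ x y : G, x*y ≠ y*x → orderOf a + orderOf b ≤ orderOf x + orderOf y) :
    ∃ p α, Nat.Prime p ∧ 0 < α ∧ orderOf a = p ^ α := by
  set A := orderOf a with hA
  have hA1 : A ≠ 1 := by
    intro h
    apply hab
    have ha1 : a = 1 := orderOf_eq_one_iff.mp h
    rw [ha1, one_mul, mul_one]
  have hA0 : A ≠ 0 := (orderOf_pos a).ne'
  by_cases hpp : IsPrimePow A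
  · obtain ⟨p, α, hp, hα, hpa⟩ := hpp
    exact ⟨p, α, Nat.prime_iff.mpr hp, hα, hpa.symm⟩
  exfalso
  set p := A.minFac with hpdef
  have hp : p.Prime := Nat.minFac_prime hA1
  set k := A.factorization p with hk
  set m₁ := p ^ k with hm1def
  have hm1dvd : m₁ ∣ A := Nat.ordProj_dvd A p
  set m₂ := A / m₁ with hm2def
  have hm2 : A = m₁ * m₂ := (Nat.mul_div_cancel' hm1dvd).symm
  have hcop : Nat.Coprime m₁ m₂ := Nat.Coprime.pow_left k (Nat.coprime_ordCompl hp hA0)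
  have hk0 : k ≠ 0 := by
    have : 0 < k := hp.factorization_pos_of_dvd hA0 (Nat.minFac_dvd A)
    omega
  have hm1_1 : 1 < m₁ := Nat.one_lt_pow hk0 hp.one_lt
  have hm1_0 : 0 < m₁ := by omega
  have hm2_1 : 1 < m₂ := by
    rcases Nat.lt_or_ge m₂ 2 with h | h
    · interval_cases m₂
      · omega
      · exact absurd ⟨p, k, Nat.prime_iff.mp hp, Nat.pos_of_ne_zero hk0, by omega⟩ hpp
    · exact h
  have hm1A : m₁ < A := by
    rw [hm2]
    exact lt_mul_iff_one_lt_right hm1_0 |>.mpr hm2_1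
  have hm2A : m₂ < A := by
    rw [hm2]
    exact lt_mul_iff_one_lt_left (by omega) |>.mpr hm1_1
  have hm2dvd : m₂ ∣ A := ⟨m₁, by rw [hm2, mul_comm]⟩
  have hoa1 : orderOf (a ^ m₂) = m₁ := by
    rw [orderOf_pow, ← hA, Nat.gcd_eq_right hm2dvd, hm2, Nat.mul_div_cancel _ (by omega)]
  have hoa2 : orderOf (a ^ m₁) = m₂ := by
    rw [orderOf_pow, ← hA, Nat.gcd_eq_right hm1dvd, hm2, Nat.mul_div_cancel_left _ hm1_0]
  have hnc : ¬ Commute b (a ^ m₁) ∨ ¬ Commute b (a ^ m₂) := by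
    by_contra hcon
    push_neg at hcon
    obtain ⟨h1, h2⟩ := hcon
    obtain ⟨u, v, huv⟩ : IsCoprime ((m₁:ℕ):ℤ) ((m₂:ℕ):ℤ) := Nat.isCoprime_iff_coprime.mpr hcop
    have hsplit : a = (a^m₁)^u * (a^m₂)^v := by
      calc a = a ^ (1:ℤ) := (zpow_one a).symm
      _ = a ^ (u * (m₁:ℤ) + v * (m₂:ℤ)) := by rw [huv]
      _ = (a ^ ((m₁:ℕ):ℤ))^u * (a ^ ((m₂:ℕ):ℤ))^v := by
          rw [zpow_add, show u * ((m₁:ℕ):ℤ) = ((m₁:ℕ):ℤ) * u by ring,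
            show v * ((m₂:ℕ):ℤ) = ((m₂:ℕ):ℤ) * v by ring, zpow_mul, zpow_mul]
      _ = (a^m₁)^u * (a^m₂)^v := by rw [zpow_natCast, zpow_natCast]
    have : Commute b a := by
      rw [hsplit]
      exact (h1.zpow_right u).mul_right (h2.zpow_right v)
    exact hab this.symm.eq
  rcases hnc with h | h
  · have hne : (a^m₁)*b ≠ b*(a^m₁) := fun hh => h hh.symm
    have := hmin (a^m₁) b hne
    rw [hoa2] at this
    omega
  · have hne : (a^m₂)*b ≠ b*(a^m₂) := fun hh => h hh.symm
    have := hmin (a^m₂) b hne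
    rw [hoa1] at this
    omega

lemma reduction_contra {a b c : G} {p α β : ℕ} (hp : p.Prime)
    (hab : a*b ≠ b*a)
    (hmin : ∀ x y : G, x*y ≠ y*x → orderOf a + orderOf b ≤ orderOf x + orderOf y)
    (hA : orderOf a = p ^ α) (hB : orderOf b = p ^ β)
    (hβα : β ≤ α) (h2β : 2 ≤ β)
    (hconj : b⁻¹*a*b = a*c) (hca : Commute c a) (hcb : Commute c b)
    (hcord : orderOf c = p)
    (hcA : c ∈ Subgroup.zpowers a) (hcB : c ∈ Subgroup.zpowers b)
    (hdvd : p ∣ Nat.choose (p ^ (β-1)) 2) : False := by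
  set K := p ^ (β - 1) with hK
  obtain ⟨⟨e0, he0⟩, -⟩ := layer hp hB (by omega) hcB hcord
  obtain ⟨-, ⟨d', hd'⟩⟩ := layer hp hA (by omega) hcA hcord
  have hKa : (a ^ K) ^ (p ^ (α - β)) = a ^ (p ^ (α-1)) := by
    rw [← pow_mul, hK, ← pow_add]
    congr 2
    omega
  have hdK : (a ^ K) ^ ((p ^ (α - β) : ℕ) * d' : ℤ) = c := by
    rw [zpow_mul, zpow_natCast, hKa, hd']
  have hcp : c ^ p = 1 := by rw [← hcord]; exact pow_orderOf_eq_one c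
  obtain ⟨m, hm⟩ := red hconj hca hcb hcp hdvd e0 he0 _ hdK
  have hod : orderOf (b * a ^ m) ∣ K := orderOf_dvd_of_pow_eq_one hm
  have hKpos : 0 < K := pow_pos hp.pos _
  have hlt : orderOf (b * a ^ m) < orderOf b := by
    have h1 := Nat.le_of_dvd hKpos hod
    have h2 : K < p ^ β := Nat.pow_lt_pow_right hp.one_lt (by omega)
    omega
  have hnc : a * (b * a ^ m) ≠ (b * a ^ m) * a := by
    intro h
    apply hab
    have hcma : a ^ m * a = a * a ^ m := ((Commute.refl a).zpow_left m).eq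
    have h6 : a * b * a ^ m = b * a * a ^ m := by
      calc a * b * a ^ m = a * (b * a ^ m) := by group
      _ = b * a ^ m * a := h
      _ = b * (a ^ m * a) := by group
      _ = b * (a * a ^ m) := by rw [hcma]
      _ = b * a * a ^ m := by group
    exact mul_right_cancel h6
  have := hmin a (b * a ^ m) hnc
  omega

end Main

section Assemble
variable {G : Type*} [Group G] [Finite G]

lemma exists_q8 (hnorm : ∀ x g : G, g * x * g⁻¹ ∈ Subgroup.zpowers x)
    (a0 b0 : G) (hab0 : a0 * b0 ≠ b0 * a0) :
    ∃ a b : G, a*a = b*b ∧ (a*a)*(a*a) = 1 ∧ a*a ≠ 1 ∧ b⁻¹*a*b = a⁻¹ := by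
  classical
  have hex : ∃ n, ∃ x y : G, x*y ≠ y*x ∧ orderOf x + orderOf y = n :=
    ⟨_, a0, b0, hab0, rfl⟩
  obtain ⟨a, b, hab, hsum⟩ := Nat.find_spec hex
  have hmin : ∀ x y : G, x*y ≠ y*x → orderOf a + orderOf b ≤ orderOf x + orderOf y := by
    intro x y h
    rw [hsum]
    exact Nat.find_min' hex ⟨x, y, h, rfl⟩
  have hab' : b*a ≠ a*b := fun h => hab h.symm
  have hmin' : ∀ x y : G, x*y ≠ y*x → orderOf b + orderOf a ≤ orderOf x + orderOf y := by
    intro x y h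
    rw [Nat.add_comm]
    exact hmin x y h
  set c := a⁻¹*b⁻¹*a*b with hcdef
  have hc1 : c ≠ 1 := by
    intro h
    apply hab
    calc a*b = b*a*(a⁻¹*b⁻¹*a*b) := by group
    _ = b*a*c := by rw [← hcdef]
    _ = b*a*1 := by rw [h]
    _ = b*a := mul_one _
  have hcmem_a : c ∈ Subgroup.zpowers a := by
    have h1 := hnorm a b⁻¹
    rw [inv_inv] at h1
    have h2 : c = a⁻¹*(b⁻¹*a*b) := by rw [hcdef]; group
    rw [h2]
    exact mul_mem (inv_mem (Subgroup.mem_zpowers a)) h1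
  have hcmem_b : c ∈ Subgroup.zpowers b := by
    have h1 := hnorm b a⁻¹
    rw [inv_inv] at h1
    have h2 : c = (a⁻¹*b*a)⁻¹ * b := by rw [hcdef]; group
    rw [h2]
    exact mul_mem (inv_mem h1) (Subgroup.mem_zpowers b)
  have hca : Commute c a := (commute_of_mem_zpowers' hcmem_a).symm
  have hcb : Commute c b := (commute_of_mem_zpowers' hcmem_b).symm
  have hconj : b⁻¹*a*b = a*c := by rw [hcdef]; group
  obtain ⟨p, α, hp, hα, hA⟩ := order_primepow hab hmin
  obtain ⟨q, β, hq, hβ, hB⟩ := order_primepow hab' hmin'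
  have hpq : p = q := by
    have hdA : orderOf c ∣ p ^ α := hA ▸ orderOf_dvd_of_mem_zpowers hcmem_a
    have hdB : orderOf c ∣ q ^ β := hB ▸ orderOf_dvd_of_mem_zpowers hcmem_b
    have hoc1 : orderOf c ≠ 1 := fun h => hc1 (orderOf_eq_one_iff.mp h)
    set r := (orderOf c).minFac with hrdef
    have hr : r.Prime := Nat.minFac_prime hoc1
    have hrd : r ∣ orderOf c := Nat.minFac_dvd _
    have h1 : r = p :=
      (Nat.prime_dvd_prime_iff_eq hr hp).mp (hr.dvd_of_dvd_pow (hrd.trans hdA))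
    have h2 : r = q :=
      (Nat.prime_dvd_prime_iff_eq hr hq).mp (hr.dvd_of_dvd_pow (hrd.trans hdB))
    rw [← h1, h2]
  subst hpq
  have hcord : orderOf c = p := by
    by_cases hcp : c ^ p = 1
    · have h1 := orderOf_dvd_of_pow_eq_one hcp
      rcases (Nat.dvd_prime hp).mp h1 with h | h
      · exact absurd (orderOf_eq_one_iff.mp h) hc1
      · exact h
    exfalso
    have hk := kpow hconj hca ((p:ℕ):ℤ)
    rw [zpow_natCast, zpow_natCast] at hk
    have hnc : (a^p)*b ≠ b*(a^p) := by
      intro h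
      apply hcp
      have h2 : b⁻¹ * a^p * b = a^p := by
        calc b⁻¹*(a^p)*b = b⁻¹*((a^p)*b) := by group
        _ = b⁻¹*(b*(a^p)) := by rw [h]
        _ = a^p := by group
      rw [h2] at hk
      exact (left_eq_mul.mp hk)
    have hord : orderOf (a^p) = p^(α-1) := by
      rw [orderOf_pow, hA, Nat.gcd_eq_right (dvd_pow_self p hα.ne'),
        show p ^ α = p^(α-1)*p by rw [← pow_succ]; congr 1; omega,
        Nat.mul_div_cancel _ hp.pos]
    have hle := hmin (a^p) b hnc
    rw [hord, hA] at hle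
    have := Nat.pow_lt_pow_right hp.one_lt (show α - 1 < α by omega)
    omega
  -- α, β ≥ 2
  have h2α : 2 ≤ α := by
    by_contra h
    have hα1 : α = 1 := by omega
    obtain ⟨⟨e, he⟩, -⟩ := layer hp hA (by omega) hcmem_a hcord
    rw [hα1] at he
    simp only [Nat.sub_self, pow_zero, pow_one] at he
    apply hab
    have : Commute b a := by
      rw [he]
      exact (hcb.symm.zpow_right e)
    exact this.symm.eq
  have h2β : 2 ≤ β := by
    by_contra h
    have hβ1 : β = 1 := by omega
    obtain ⟨⟨e, he⟩, -⟩ := layer hp hB (by omega) hcmem_b hcord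
    rw [hβ1] at he
    simp only [Nat.sub_self, pow_zero, pow_one] at he
    apply hab
    have : Commute a b := by
      rw [he]
      exact (hca.symm.zpow_right e)
    exact this.eq
  -- swapped-orientation facts
  have hconj' : a⁻¹*b*a = b*c⁻¹ := by rw [hcdef]; group
  have hca' : Commute c⁻¹ b := hcb.inv_left
  have hcb' : Commute c⁻¹ a := hca.inv_left
  have hcord' : orderOf c⁻¹ = p := by rw [orderOf_inv]; exact hcord
  have hcmem_a' : c⁻¹ ∈ Subgroup.zpowers a := inv_mem hcmem_a
  have hcmem_b' : c⁻¹ ∈ Subgroup.zpowers b := inv_mem hcmem_b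
  -- p = 2
  have hp2 : p = 2 := by
    by_contra hne2
    rcases le_total β α with h | h
    · exact reduction_contra hp hab hmin hA hB h h2β hconj hca hcb hcord hcmem_a hcmem_b
        (pdvd_choose_odd hp hne2 h2β)
    · exact reduction_contra hp hab' hmin' hB hA h h2α hconj' hca' hcb' hcord' hcmem_b'
        hcmem_a' (pdvd_choose_odd hp hne2 h2α)
  subst hp2
  have hnb3 : ¬(3 ≤ β ∧ β ≤ α) := by
    rintro ⟨h3, hle⟩
    exact reduction_contra hp hab hmin hA hB hle h2β hconj hca hcb hcord hcmem_a hcmem_b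
      (pdvd_choose_two h3)
  have hna3 : ¬(3 ≤ α ∧ α ≤ β) := by
    rintro ⟨h3, hle⟩
    exact reduction_contra hp hab' hmin' hB hA hle h2α hconj' hca' hcb' hcord' hcmem_b'
      hcmem_a' (pdvd_choose_two h3)
  have hcc : c ^ (2:ℕ) = 1 := by rw [← hcord]; exact pow_orderOf_eq_one c
  have c2 : c * c = 1 := by rw [← pow_two]; exact hcc
  -- exact layer identities
  have hc2' : c ^ (2:ℤ) = 1 := by
    rw [show (2:ℤ) = ((2:ℕ):ℤ) from rfl, zpow_natCast, hcc]
  have key : ∀ (x : G) (γ : ℕ) (e : ℤ), 0 < γ → orderOf x = 2^γ → x ^ (2^(γ-1)) = c^e →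
      x ^ (2^(γ-1)) = c := by
    intro x γ e hγ hx he
    have hee : c ^ e = c ^ (e % 2) := by
      conv_lhs => rw [show e = 2*(e/2) + e%2 from (Int.mul_ediv_add_emod e 2).symm]
      rw [zpow_add, zpow_mul, hc2', one_zpow, one_mul]
    have h0 : 0 ≤ e % 2 := Int.emod_nonneg e (by norm_num)
    have h3 : e % 2 < 2 := Int.emod_lt_of_pos e (by norm_num)
    set r := e % 2 with hr
    interval_cases r
    · exfalso
      rw [zpow_zero] at hee
      have hx1 : x ^ (2^(γ-1)) = 1 := by rw [he, hee]
      have hdvd := orderOf_dvd_of_pow_eq_one hx1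
      rw [hx] at hdvd
      have hle := Nat.le_of_dvd (pow_pos (by norm_num) _) hdvd
      have := Nat.pow_lt_pow_right (show 1 < 2 by norm_num) (show γ - 1 < γ by omega)
      omega
    · rw [zpow_one] at hee
      rw [he, hee]
  have ha2 : a ^ (2^(α-1)) = c := by
    obtain ⟨⟨e, he⟩, -⟩ := layer hp hA (by omega) hcmem_a hcord
    exact key a α e (by omega) hA he
  have hb2 : b ^ (2^(β-1)) = c := by
    obtain ⟨⟨e, he⟩, -⟩ := layer hp hB (by omega) hcmem_b hcord
    exact key b β e (by omega) hB he
  rcases Nat.lt_or_ge α 3 with hα3 | hα3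
  · rcases Nat.lt_or_ge β 3 with hβ3 | hβ3
    · -- α = β = 2 : done
      have hα2 : α = 2 := by omega
      have hβ2 : β = 2 := by omega
      have ha2' : a*a = c := by
        have h := ha2
        rw [hα2, show (2:ℕ)^(2-1) = 2 by norm_num, pow_two] at h
        exact h
      have hb2' : b*b = c := by
        have h := hb2
        rw [hβ2, show (2:ℕ)^(2-1) = 2 by norm_num, pow_two] at h
        exact h
      refine ⟨a, b, by rw [ha2', hb2'], by rw [ha2']; exact c2, by rw [ha2']; exact hc1, ?_⟩
      rw [hconj]
      have h1 : a*(a*c) = 1 := by rw [← mul_assoc, ha2', c2]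
      exact (inv_eq_of_mul_eq_one_right h1).symm
    · -- α = 2, β ≥ 3 : s-trick
      exfalso
      have hα2 : α = 2 := by omega
      set t := b ^ (2^(β-2)) with htdef
      have htmem : t ∈ Subgroup.zpowers b := Subgroup.mem_zpowers_iff.mpr ⟨((2^(β-2):ℕ):ℤ), by rw [zpow_natCast, htdef]⟩
      have hcinvpow : (c⁻¹) ^ (2^(β-2)) = 1 := by
        rw [inv_pow, cpow_of_dvd hcc (dvd_pow_self 2 (by omega : β-2 ≠ 0)), inv_one]
      have hta : t * a = a * t := pow_comm_of hconj' hca' _ hcinvpow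
      have htt : t*t = c := by
        rw [htdef, ← pow_add, show 2^(β-2) + 2^(β-2) = 2^(β-1) by
          rw [show β-1 = (β-2)+1 by omega, pow_succ]; ring]
        exact hb2
      have ha2' : a*a = c := by
        have h := ha2
        rw [hα2, show (2:ℕ)^(2-1) = 2 by norm_num, pow_two] at h
        exact h
      have hsq : (a*t)*(a*t) = 1 := by
        calc (a*t)*(a*t) = a*(t*a)*t := by group
        _ = a*(a*t)*t := by rw [hta]
        _ = (a*a)*(t*t) := by group
        _ = c*c := by rw [ha2', htt]
        _ = 1 := c2
      exact strick hnorm hab' htmem hta.symm hsq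
  · -- α ≥ 3 ⇒ β = 2 : mirrored s-trick
    exfalso
    have hβ2 : β = 2 := by
      by_contra h
      have h3 : 3 ≤ β := by
        rcases Nat.lt_or_ge β 3 with hh | hh
        · omega
        · exact hh
      rcases le_total β α with hh | hh
      · exact hnb3 ⟨h3, hh⟩
      · exact hna3 ⟨by omega, hh⟩
    set t := a ^ (2^(α-2)) with htdef
    have htmem : t ∈ Subgroup.zpowers a := Subgroup.mem_zpowers_iff.mpr ⟨((2^(α-2):ℕ):ℤ), by rw [zpow_natCast, htdef]⟩
    have hcpow : c ^ (2^(α-2)) = 1 := cpow_of_dvd hcc (dvd_pow_self 2 (by omega : α-2 ≠ 0))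
    have htb : t * b = b * t := pow_comm_of hconj hca _ hcpow
    have htt : t*t = c := by
      rw [htdef, ← pow_add, show 2^(α-2) + 2^(α-2) = 2^(α-1) by
        rw [show α-1 = (α-2)+1 by omega, pow_succ]; ring]
      exact ha2
    have hb2' : b*b = c := by
      have h := hb2
      rw [hβ2, show (2:ℕ)^(2-1) = 2 by norm_num, pow_two] at h
      exact h
    have hsq : (b*t)*(b*t) = 1 := by
      calc (b*t)*(b*t) = b*(t*b)*t := by group
      _ = b*(b*t)*t := by rw [htb]
      _ = (b*b)*(t*t) := by group
      _ = c*c := by rw [hb2', htt]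
      _ = 1 := c2
    exact strick hnorm hab htmem htb.symm hsq

end Assemble


open Subgroup

section Q8Case

variable {G : Type*} [Group G] [Finite G]

lemma dichotomy (hnorm : ∀ x g : G, g * x * g⁻¹ ∈ Subgroup.zpowers x)
    (x : G) (hx4 : x*x*(x*x) = 1) (hx2 : ¬(x*x = 1)) (g : G) :
    g*x*g⁻¹ = x ∨ g*x*g⁻¹ = x⁻¹ := by
  obtain ⟨k, hk⟩ := Subgroup.mem_zpowers_iff.mp (hnorm x g)
  have hx4' : x ^ (4:ℤ) = 1 := by
    rw [show (4:ℤ) = ((4:ℕ):ℤ) from rfl, zpow_natCast,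
      show x^(4:ℕ) = x*x*(x*x) by simp [pow_succ, mul_assoc]]
    exact hx4
  have hk4 : x ^ (k % 4) = g*x*g⁻¹ := by
    rw [← hk]
    conv_rhs => rw [show k = 4*(k/4) + k%4 from (Int.mul_ediv_add_emod k 4).symm]
    rw [zpow_add, zpow_mul, hx4', one_zpow, one_mul]
  have h0 : 0 ≤ k % 4 := Int.emod_nonneg k (by norm_num)
  have h3 : k % 4 < 4 := Int.emod_lt_of_pos k (by norm_num)
  set r := k % 4 with hr
  interval_cases r
  · exfalso
    rw [zpow_zero] at hk4
    have hx1 : x = 1 := by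
      calc x = g⁻¹ * (g*x*g⁻¹) * g := by group
      _ = g⁻¹ * 1 * g := by rw [← hk4]
      _ = 1 := by group
    exact hx2 (by rw [hx1, one_mul])
  · left; rw [← hk4, zpow_one]
  · exfalso
    apply hx2
    have h2 : g*(x*x)*g⁻¹ = (g*x*g⁻¹)*(g*x*g⁻¹) := by group
    rw [← hk4] at h2
    have h2' : g*(x*x)*g⁻¹ = 1 := by
      rw [h2, show x^(2:ℤ) * x^(2:ℤ) = x^(4:ℤ) by rw [← zpow_add]; norm_num, hx4']
    calc x*x = g⁻¹ * (g*(x*x)*g⁻¹) * g := by group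
    _ = g⁻¹ * 1 * g := by rw [h2']
    _ = 1 := by group
  · right
    rw [← hk4, show (3:ℤ) = 4 + (-1) by norm_num, zpow_add, hx4', one_mul, zpow_neg, zpow_one]

set_option maxHeartbeats 2000000 in
lemma q8_case (hnorm : ∀ x g : G, g * x * g⁻¹ ∈ Subgroup.zpowers x)
    (a b : G) (hsq : a * a = b * b) (h4 : (a * a) * (a * a) = 1) (hne : a * a ≠ 1)
    (hconj : b⁻¹ * a * b = a⁻¹) :
    ∃ (H : Subgroup G) (φ : MulAut G), H.map φ.toMonoidHom ≠ H := by
  classical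
  set c := a * a with hc
  have hcb : b * b = c := hsq.symm
  have hc2 : c * c = 1 := h4
  have hcinv : c⁻¹ = c := by rw [inv_eq_iff_mul_eq_one, hc2]
  have hac : a * c = c * a := by rw [hc]; group
  have hbc : b * c = c * b := by rw [← hcb]; group
  have hainv : a⁻¹ = a * c := inv_eq_of_mul_eq_one_right (by rw [← mul_assoc, ← hc, hc2])
  have hbinv : b⁻¹ = b * c := inv_eq_of_mul_eq_one_right (by rw [← mul_assoc, hcb, hc2])
  have hinvinv : a⁻¹ * a⁻¹ = c := by
    rw [show a⁻¹*a⁻¹ = (a*a)⁻¹ by group, ← hc, hcinv]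
  have hane : ¬((a:G)⁻¹ = a) := by
    intro h
    apply hne
    rw [hc]
    nth_rewrite 1 [← h]
    exact inv_mul_cancel a
  have hbne : ¬((b:G)⁻¹ = b) := by
    intro h
    apply hne
    rw [hsq]
    nth_rewrite 1 [← h]
    exact inv_mul_cancel b
  have e4 : b⁻¹*a⁻¹*b = a := by
    rw [show b⁻¹*a⁻¹*b = (b⁻¹*a*b)⁻¹ by group, hconj, inv_inv]
  have hbab : b*a*b⁻¹ = a⁻¹ := by
    calc b*a*b⁻¹ = b*(b⁻¹*a⁻¹*b)*b⁻¹ := by rw [e4]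
    _ = a⁻¹ := by group
  have e1 : b*a⁻¹*b⁻¹ = a := by
    rw [show b*a⁻¹*b⁻¹ = (b*a*b⁻¹)⁻¹ by group, hbab, inv_inv]
  have e5 : a*b = b*a⁻¹ := by
    calc a*b = b*(b⁻¹*a*b) := by group
    _ = b*a⁻¹ := by rw [hconj]
  have haba : a*b*a⁻¹ = b⁻¹ := by
    calc a*b*a⁻¹ = (a*b)*a⁻¹ := by group
    _ = b*a⁻¹*a⁻¹ := by rw [e5]
    _ = b*(a⁻¹*a⁻¹) := by group
    _ = b*c := by rw [hinvinv]
    _ = b⁻¹ := hbinv.symm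
  have e2 : a*b⁻¹*a⁻¹ = b := by
    rw [show a*b⁻¹*a⁻¹ = (a*b*a⁻¹)⁻¹ by group, haba, inv_inv]
  have e3 : a⁻¹*b⁻¹*a = b := by
    calc a⁻¹*b⁻¹*a = a⁻¹*(a*b*a⁻¹)*a := by rw [haba]
    _ = b := by group
  have e6 : a*b⁻¹ = b*a := by
    calc a*b⁻¹ = (a*b⁻¹*a⁻¹)*a := by group
    _ = b*a := by rw [e2]
  have hab_ne : a*b ≠ b*a := by
    intro h
    apply hane
    have h2 : b * a⁻¹ = b * a := by rw [← e5]; exact h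
    exact mul_left_cancel h2
  have ha' : a⁻¹*c = a := by rw [hainv, mul_assoc, hc2, mul_one]
  have hb' : b⁻¹*c = b := by rw [hbinv, mul_assoc, hc2, mul_one]
  have hca' : c*a⁻¹ = a := by rw [hainv, ← mul_assoc, ← hac, mul_assoc, hc2, mul_one]
  have hcb' : c*b⁻¹ = b := by rw [hbinv, ← mul_assoc, ← hbc, mul_assoc, hc2, mul_one]
  -- key identities
  have iAA : b*a⁻¹*(b⁻¹*a⁻¹) = 1 := by
    rw [show b*a⁻¹*(b⁻¹*a⁻¹) = (b*a⁻¹*b⁻¹)*a⁻¹ by group, e1]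
    group
  have iAB : b*a⁻¹*(a*b) = c := by
    rw [show b*a⁻¹*(a*b) = b*b by group, hcb]
  have iAK : b*a⁻¹*c = a*b⁻¹ := by
    rw [mul_assoc, ha']
    exact e6.symm
  have iBA : a*b⁻¹*(b*a) = c := by
    rw [show a*b⁻¹*(b*a) = a*a by group, ← hc]
  have iBB : a*b⁻¹*(a⁻¹*b⁻¹) = 1 := by
    rw [show a*b⁻¹*(a⁻¹*b⁻¹) = (a*b⁻¹*a⁻¹)*b⁻¹ by group, e2]
    group
  have iBK : a*b⁻¹*c = b*a⁻¹ := by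
    rw [mul_assoc, hb']
    exact e5
  have iKA : c*(b⁻¹*a) = a*b⁻¹ := by
    rw [← mul_assoc, hcb']
    exact e6.symm
  have iKB : c*(a⁻¹*b) = b*a⁻¹ := by
    rw [← mul_assoc, hca']
    exact e5
  -- J identities (conjugation by the t-values)
  have hJ1 : b*a⁻¹*a*(b*a⁻¹)⁻¹ = a⁻¹ := by
    rw [show b*a⁻¹*a*(b*a⁻¹)⁻¹ = b*a*b⁻¹ by group, hbab]
  have hJ2 : b*a⁻¹*b⁻¹*(b*a⁻¹)⁻¹ = b := by
    rw [show b*a⁻¹*b⁻¹*(b*a⁻¹)⁻¹ = b*(a⁻¹*b⁻¹*a)*b⁻¹ by group, e3]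
    group
  have hJ3 : a*b⁻¹*a⁻¹*(a*b⁻¹)⁻¹ = a := by
    rw [show a*b⁻¹*a⁻¹*(a*b⁻¹)⁻¹ = a*(b⁻¹*a⁻¹*b)*a⁻¹ by group, e4]
    group
  have hJ4 : a*b⁻¹*b*(a*b⁻¹)⁻¹ = b⁻¹ := by
    rw [show a*b⁻¹*b*(a*b⁻¹)⁻¹ = a*b*a⁻¹ by group, haba]
  have hJ5 : c*a⁻¹*c⁻¹ = a⁻¹ := by
    rw [show c*a⁻¹*c⁻¹ = (c*a⁻¹)*c⁻¹ by group, hca', hcinv, hainv]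
  have hJ6 : c*b⁻¹*c⁻¹ = b⁻¹ := by
    rw [show c*b⁻¹*c⁻¹ = (c*b⁻¹)*c⁻¹ by group, hcb', hcinv, hbinv]
  -- dichotomies
  have Da : ∀ g : G, g*a*g⁻¹ = a ∨ g*a*g⁻¹ = a⁻¹ := by
    refine dichotomy hnorm a ?_ ?_
    · rw [← hc]; exact hc2
    · intro h; exact hne (by rw [hc]; exact h)
  have Db : ∀ g : G, g*b*g⁻¹ = b ∨ g*b*g⁻¹ = b⁻¹ := by
    refine dichotomy hnorm b ?_ ?_
    · rw [hcb]; exact hc2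
    · intro h; exact hne (hsq.trans h)
  -- the twisting function
  set t : G → G := fun x => if x*a*x⁻¹ = a then (if x*b*x⁻¹ = b then (1:G) else b*a⁻¹)
    else (if x*b*x⁻¹ = b then a*b⁻¹ else c) with ht_def
  have ht1 : ∀ x : G, x*a*x⁻¹ = a → x*b*x⁻¹ = b → t x = 1 := by
    intro x h1 h2; simp only [ht_def]; rw [if_pos h1, if_pos h2]
  have htA : ∀ x : G, x*a*x⁻¹ = a → x*b*x⁻¹ = b⁻¹ → t x = b*a⁻¹ := by
    intro x h1 h2; simp only [ht_def]
    rw [if_pos h1, if_neg (fun hcon => hbne (h2.symm.trans hcon))]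
  have htB : ∀ x : G, x*a*x⁻¹ = a⁻¹ → x*b*x⁻¹ = b → t x = a*b⁻¹ := by
    intro x h1 h2; simp only [ht_def]
    rw [if_neg (fun hcon => hane (h1.symm.trans hcon)), if_pos h2]
  have htK : ∀ x : G, x*a*x⁻¹ = a⁻¹ → x*b*x⁻¹ = b⁻¹ → t x = c := by
    intro x h1 h2; simp only [ht_def]
    rw [if_neg (fun hcon => hane (h1.symm.trans hcon)),
      if_neg (fun hcon => hbne (h2.symm.trans hcon))]
  set F : G → G := fun x => t x * x with hF_def
  have hF : ∀ x : G, F x = t x * x := fun _ => rfl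
  have hFmul : ∀ g h : G, F (g*h) = F g * F h := by
    intro g h
    rcases Da g with hga | hga <;> rcases Db g with hgb | hgb <;>
      rcases Da h with hha | hha <;> rcases Db h with hhb | hhb
    · -- g:1 h:1 -> 1
      have cA : (g*h)*a*(g*h)⁻¹ = a := by
        rw [show (g*h)*a*(g*h)⁻¹ = g*(h*a*h⁻¹)*g⁻¹ by group, hha, hga]
      have cB : (g*h)*b*(g*h)⁻¹ = b := by
        rw [show (g*h)*b*(g*h)⁻¹ = g*(h*b*h⁻¹)*g⁻¹ by group, hhb, hgb]
      rw [hF (g*h), hF g, hF h, ht1 (g*h) cA cB, ht1 g hga hgb, ht1 h hha hhb]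
      have hV : g*(1:G)*g⁻¹ = 1 := by group
      have key : (1:G) = (1:G) * ((1:G)) := (one_mul _).symm
      have key2 : (1:G) * (g*((1:G))*g⁻¹) = (1:G) := by rw [hV]; exact key.symm
      conv_lhs => rw [← key2]
      group
    · -- g:1 h:A -> A
      have cA : (g*h)*a*(g*h)⁻¹ = a := by
        rw [show (g*h)*a*(g*h)⁻¹ = g*(h*a*h⁻¹)*g⁻¹ by group, hha, hga]
      have cB : (g*h)*b*(g*h)⁻¹ = b⁻¹ := by
        rw [show (g*h)*b*(g*h)⁻¹ = g*(h*b*h⁻¹)*g⁻¹ by group, hhb, show g*b⁻¹*g⁻¹ = (g*b*g⁻¹)⁻¹ by group, hgb]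
      rw [hF (g*h), hF g, hF h, htA (g*h) cA cB, ht1 g hga hgb, htA h hha hhb]
      have hV : g*(b*a⁻¹)*g⁻¹ = b*a⁻¹ := by
        rw [show g*(b*a⁻¹)*g⁻¹ = (g*b*g⁻¹)*(g*a*g⁻¹)⁻¹ by group, hgb, hga]
      have key : b*a⁻¹ = (1:G) * (b*a⁻¹) := (one_mul _).symm
      have key2 : (1:G) * (g*(b*a⁻¹)*g⁻¹) = b*a⁻¹ := by rw [hV]; exact key.symm
      conv_lhs => rw [← key2]
      group
    · -- g:1 h:B -> B
      have cA : (g*h)*a*(g*h)⁻¹ = a⁻¹ := by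
        rw [show (g*h)*a*(g*h)⁻¹ = g*(h*a*h⁻¹)*g⁻¹ by group, hha, show g*a⁻¹*g⁻¹ = (g*a*g⁻¹)⁻¹ by group, hga]
      have cB : (g*h)*b*(g*h)⁻¹ = b := by
        rw [show (g*h)*b*(g*h)⁻¹ = g*(h*b*h⁻¹)*g⁻¹ by group, hhb, hgb]
      rw [hF (g*h), hF g, hF h, htB (g*h) cA cB, ht1 g hga hgb, htB h hha hhb]
      have hV : g*(a*b⁻¹)*g⁻¹ = a*b⁻¹ := by
        rw [show g*(a*b⁻¹)*g⁻¹ = (g*a*g⁻¹)*(g*b*g⁻¹)⁻¹ by group, hga, hgb]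
      have key : a*b⁻¹ = (1:G) * (a*b⁻¹) := (one_mul _).symm
      have key2 : (1:G) * (g*(a*b⁻¹)*g⁻¹) = a*b⁻¹ := by rw [hV]; exact key.symm
      conv_lhs => rw [← key2]
      group
    · -- g:1 h:K -> K
      have cA : (g*h)*a*(g*h)⁻¹ = a⁻¹ := by
        rw [show (g*h)*a*(g*h)⁻¹ = g*(h*a*h⁻¹)*g⁻¹ by group, hha, show g*a⁻¹*g⁻¹ = (g*a*g⁻¹)⁻¹ by group, hga]
      have cB : (g*h)*b*(g*h)⁻¹ = b⁻¹ := by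
        rw [show (g*h)*b*(g*h)⁻¹ = g*(h*b*h⁻¹)*g⁻¹ by group, hhb, show g*b⁻¹*g⁻¹ = (g*b*g⁻¹)⁻¹ by group, hgb]
      rw [hF (g*h), hF g, hF h, htK (g*h) cA cB, ht1 g hga hgb, htK h hha hhb]
      have hV : g*c*g⁻¹ = c := by
        rw [hc, show g*(a*a)*g⁻¹ = (g*a*g⁻¹)*(g*a*g⁻¹) by group, hga, ← hc]
      have key : c = (1:G) * (c) := (one_mul _).symm
      have key2 : (1:G) * (g*(c)*g⁻¹) = c := by rw [hV]; exact key.symm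
      conv_lhs => rw [← key2]
      group
    · -- g:A h:1 -> A
      have cA : (g*h)*a*(g*h)⁻¹ = a := by
        rw [show (g*h)*a*(g*h)⁻¹ = g*(h*a*h⁻¹)*g⁻¹ by group, hha, hga]
      have cB : (g*h)*b*(g*h)⁻¹ = b⁻¹ := by
        rw [show (g*h)*b*(g*h)⁻¹ = g*(h*b*h⁻¹)*g⁻¹ by group, hhb, hgb]
      rw [hF (g*h), hF g, hF h, htA (g*h) cA cB, htA g hga hgb, ht1 h hha hhb]
      have hV : g*(1:G)*g⁻¹ = 1 := by group
      have key : b*a⁻¹ = b*a⁻¹ * ((1:G)) := (mul_one _).symm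
      have key2 : b*a⁻¹ * (g*((1:G))*g⁻¹) = b*a⁻¹ := by rw [hV]; exact key.symm
      conv_lhs => rw [← key2]
      group
    · -- g:A h:A -> 1
      have cA : (g*h)*a*(g*h)⁻¹ = a := by
        rw [show (g*h)*a*(g*h)⁻¹ = g*(h*a*h⁻¹)*g⁻¹ by group, hha, hga]
      have cB : (g*h)*b*(g*h)⁻¹ = b := by
        rw [show (g*h)*b*(g*h)⁻¹ = g*(h*b*h⁻¹)*g⁻¹ by group, hhb, show g*b⁻¹*g⁻¹ = (g*b*g⁻¹)⁻¹ by group, hgb, inv_inv]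
      rw [hF (g*h), hF g, hF h, ht1 (g*h) cA cB, htA g hga hgb, htA h hha hhb]
      have hV : g*(b*a⁻¹)*g⁻¹ = b⁻¹*a⁻¹ := by
        rw [show g*(b*a⁻¹)*g⁻¹ = (g*b*g⁻¹)*(g*a*g⁻¹)⁻¹ by group, hgb, hga]
      have key : (1:G) = b*a⁻¹ * (b⁻¹*a⁻¹) := iAA.symm
      have key2 : b*a⁻¹ * (g*(b*a⁻¹)*g⁻¹) = (1:G) := by rw [hV]; exact key.symm
      conv_lhs => rw [← key2]
      group
    · -- g:A h:B -> K
      have cA : (g*h)*a*(g*h)⁻¹ = a⁻¹ := by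
        rw [show (g*h)*a*(g*h)⁻¹ = g*(h*a*h⁻¹)*g⁻¹ by group, hha, show g*a⁻¹*g⁻¹ = (g*a*g⁻¹)⁻¹ by group, hga]
      have cB : (g*h)*b*(g*h)⁻¹ = b⁻¹ := by
        rw [show (g*h)*b*(g*h)⁻¹ = g*(h*b*h⁻¹)*g⁻¹ by group, hhb, hgb]
      rw [hF (g*h), hF g, hF h, htK (g*h) cA cB, htA g hga hgb, htB h hha hhb]
      have hV : g*(a*b⁻¹)*g⁻¹ = a*b := by
        rw [show g*(a*b⁻¹)*g⁻¹ = (g*a*g⁻¹)*(g*b*g⁻¹)⁻¹ by group, hga, hgb, inv_inv]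
      have key : c = b*a⁻¹ * (a*b) := iAB.symm
      have key2 : b*a⁻¹ * (g*(a*b⁻¹)*g⁻¹) = c := by rw [hV]; exact key.symm
      conv_lhs => rw [← key2]
      group
    · -- g:A h:K -> B
      have cA : (g*h)*a*(g*h)⁻¹ = a⁻¹ := by
        rw [show (g*h)*a*(g*h)⁻¹ = g*(h*a*h⁻¹)*g⁻¹ by group, hha, show g*a⁻¹*g⁻¹ = (g*a*g⁻¹)⁻¹ by group, hga]
      have cB : (g*h)*b*(g*h)⁻¹ = b := by
        rw [show (g*h)*b*(g*h)⁻¹ = g*(h*b*h⁻¹)*g⁻¹ by group, hhb, show g*b⁻¹*g⁻¹ = (g*b*g⁻¹)⁻¹ by group, hgb, inv_inv]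
      rw [hF (g*h), hF g, hF h, htB (g*h) cA cB, htA g hga hgb, htK h hha hhb]
      have hV : g*c*g⁻¹ = c := by
        rw [hc, show g*(a*a)*g⁻¹ = (g*a*g⁻¹)*(g*a*g⁻¹) by group, hga, ← hc]
      have key : a*b⁻¹ = b*a⁻¹ * (c) := iAK.symm
      have key2 : b*a⁻¹ * (g*(c)*g⁻¹) = a*b⁻¹ := by rw [hV]; exact key.symm
      conv_lhs => rw [← key2]
      group
    · -- g:B h:1 -> B
      have cA : (g*h)*a*(g*h)⁻¹ = a⁻¹ := by
        rw [show (g*h)*a*(g*h)⁻¹ = g*(h*a*h⁻¹)*g⁻¹ by group, hha, hga]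
      have cB : (g*h)*b*(g*h)⁻¹ = b := by
        rw [show (g*h)*b*(g*h)⁻¹ = g*(h*b*h⁻¹)*g⁻¹ by group, hhb, hgb]
      rw [hF (g*h), hF g, hF h, htB (g*h) cA cB, htB g hga hgb, ht1 h hha hhb]
      have hV : g*(1:G)*g⁻¹ = 1 := by group
      have key : a*b⁻¹ = a*b⁻¹ * ((1:G)) := (mul_one _).symm
      have key2 : a*b⁻¹ * (g*((1:G))*g⁻¹) = a*b⁻¹ := by rw [hV]; exact key.symm
      conv_lhs => rw [← key2]
      group
    · -- g:B h:A -> K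
      have cA : (g*h)*a*(g*h)⁻¹ = a⁻¹ := by
        rw [show (g*h)*a*(g*h)⁻¹ = g*(h*a*h⁻¹)*g⁻¹ by group, hha, hga]
      have cB : (g*h)*b*(g*h)⁻¹ = b⁻¹ := by
        rw [show (g*h)*b*(g*h)⁻¹ = g*(h*b*h⁻¹)*g⁻¹ by group, hhb, show g*b⁻¹*g⁻¹ = (g*b*g⁻¹)⁻¹ by group, hgb]
      rw [hF (g*h), hF g, hF h, htK (g*h) cA cB, htB g hga hgb, htA h hha hhb]
      have hV : g*(b*a⁻¹)*g⁻¹ = b*a := by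
        rw [show g*(b*a⁻¹)*g⁻¹ = (g*b*g⁻¹)*(g*a*g⁻¹)⁻¹ by group, hgb, hga, inv_inv]
      have key : c = a*b⁻¹ * (b*a) := iBA.symm
      have key2 : a*b⁻¹ * (g*(b*a⁻¹)*g⁻¹) = c := by rw [hV]; exact key.symm
      conv_lhs => rw [← key2]
      group
    · -- g:B h:B -> 1
      have cA : (g*h)*a*(g*h)⁻¹ = a := by
        rw [show (g*h)*a*(g*h)⁻¹ = g*(h*a*h⁻¹)*g⁻¹ by group, hha, show g*a⁻¹*g⁻¹ = (g*a*g⁻¹)⁻¹ by group, hga, inv_inv]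
      have cB : (g*h)*b*(g*h)⁻¹ = b := by
        rw [show (g*h)*b*(g*h)⁻¹ = g*(h*b*h⁻¹)*g⁻¹ by group, hhb, hgb]
      rw [hF (g*h), hF g, hF h, ht1 (g*h) cA cB, htB g hga hgb, htB h hha hhb]
      have hV : g*(a*b⁻¹)*g⁻¹ = a⁻¹*b⁻¹ := by
        rw [show g*(a*b⁻¹)*g⁻¹ = (g*a*g⁻¹)*(g*b*g⁻¹)⁻¹ by group, hga, hgb]
      have key : (1:G) = a*b⁻¹ * (a⁻¹*b⁻¹) := iBB.symm
      have key2 : a*b⁻¹ * (g*(a*b⁻¹)*g⁻¹) = (1:G) := by rw [hV]; exact key.symm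
      conv_lhs => rw [← key2]
      group
    · -- g:B h:K -> A
      have cA : (g*h)*a*(g*h)⁻¹ = a := by
        rw [show (g*h)*a*(g*h)⁻¹ = g*(h*a*h⁻¹)*g⁻¹ by group, hha, show g*a⁻¹*g⁻¹ = (g*a*g⁻¹)⁻¹ by group, hga, inv_inv]
      have cB : (g*h)*b*(g*h)⁻¹ = b⁻¹ := by
        rw [show (g*h)*b*(g*h)⁻¹ = g*(h*b*h⁻¹)*g⁻¹ by group, hhb, show g*b⁻¹*g⁻¹ = (g*b*g⁻¹)⁻¹ by group, hgb]
      rw [hF (g*h), hF g, hF h, htA (g*h) cA cB, htB g hga hgb, htK h hha hhb]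
      have hV : g*c*g⁻¹ = c := by
        rw [hc, show g*(a*a)*g⁻¹ = (g*a*g⁻¹)*(g*a*g⁻¹) by group, hga, hinvinv]
      have key : b*a⁻¹ = a*b⁻¹ * (c) := iBK.symm
      have key2 : a*b⁻¹ * (g*(c)*g⁻¹) = b*a⁻¹ := by rw [hV]; exact key.symm
      conv_lhs => rw [← key2]
      group
    · -- g:K h:1 -> K
      have cA : (g*h)*a*(g*h)⁻¹ = a⁻¹ := by
        rw [show (g*h)*a*(g*h)⁻¹ = g*(h*a*h⁻¹)*g⁻¹ by group, hha, hga]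
      have cB : (g*h)*b*(g*h)⁻¹ = b⁻¹ := by
        rw [show (g*h)*b*(g*h)⁻¹ = g*(h*b*h⁻¹)*g⁻¹ by group, hhb, hgb]
      rw [hF (g*h), hF g, hF h, htK (g*h) cA cB, htK g hga hgb, ht1 h hha hhb]
      have hV : g*(1:G)*g⁻¹ = 1 := by group
      have key : c = c * ((1:G)) := (mul_one _).symm
      have key2 : c * (g*((1:G))*g⁻¹) = c := by rw [hV]; exact key.symm
      conv_lhs => rw [← key2]
      group
    · -- g:K h:A -> B
      have cA : (g*h)*a*(g*h)⁻¹ = a⁻¹ := by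
        rw [show (g*h)*a*(g*h)⁻¹ = g*(h*a*h⁻¹)*g⁻¹ by group, hha, hga]
      have cB : (g*h)*b*(g*h)⁻¹ = b := by
        rw [show (g*h)*b*(g*h)⁻¹ = g*(h*b*h⁻¹)*g⁻¹ by group, hhb, show g*b⁻¹*g⁻¹ = (g*b*g⁻¹)⁻¹ by group, hgb, inv_inv]
      rw [hF (g*h), hF g, hF h, htB (g*h) cA cB, htK g hga hgb, htA h hha hhb]
      have hV : g*(b*a⁻¹)*g⁻¹ = b⁻¹*a := by
        rw [show g*(b*a⁻¹)*g⁻¹ = (g*b*g⁻¹)*(g*a*g⁻¹)⁻¹ by group, hgb, hga, inv_inv]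
      have key : a*b⁻¹ = c * (b⁻¹*a) := iKA.symm
      have key2 : c * (g*(b*a⁻¹)*g⁻¹) = a*b⁻¹ := by rw [hV]; exact key.symm
      conv_lhs => rw [← key2]
      group
    · -- g:K h:B -> A
      have cA : (g*h)*a*(g*h)⁻¹ = a := by
        rw [show (g*h)*a*(g*h)⁻¹ = g*(h*a*h⁻¹)*g⁻¹ by group, hha, show g*a⁻¹*g⁻¹ = (g*a*g⁻¹)⁻¹ by group, hga, inv_inv]
      have cB : (g*h)*b*(g*h)⁻¹ = b⁻¹ := by
        rw [show (g*h)*b*(g*h)⁻¹ = g*(h*b*h⁻¹)*g⁻¹ by group, hhb, hgb]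
      rw [hF (g*h), hF g, hF h, htA (g*h) cA cB, htK g hga hgb, htB h hha hhb]
      have hV : g*(a*b⁻¹)*g⁻¹ = a⁻¹*b := by
        rw [show g*(a*b⁻¹)*g⁻¹ = (g*a*g⁻¹)*(g*b*g⁻¹)⁻¹ by group, hga, hgb, inv_inv]
      have key : b*a⁻¹ = c * (a⁻¹*b) := iKB.symm
      have key2 : c * (g*(a*b⁻¹)*g⁻¹) = b*a⁻¹ := by rw [hV]; exact key.symm
      conv_lhs => rw [← key2]
      group
    · -- g:K h:K -> 1
      have cA : (g*h)*a*(g*h)⁻¹ = a := by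
        rw [show (g*h)*a*(g*h)⁻¹ = g*(h*a*h⁻¹)*g⁻¹ by group, hha, show g*a⁻¹*g⁻¹ = (g*a*g⁻¹)⁻¹ by group, hga, inv_inv]
      have cB : (g*h)*b*(g*h)⁻¹ = b := by
        rw [show (g*h)*b*(g*h)⁻¹ = g*(h*b*h⁻¹)*g⁻¹ by group, hhb, show g*b⁻¹*g⁻¹ = (g*b*g⁻¹)⁻¹ by group, hgb, inv_inv]
      rw [hF (g*h), hF g, hF h, ht1 (g*h) cA cB, htK g hga hgb, htK h hha hhb]
      have hV : g*c*g⁻¹ = c := by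
        rw [hc, show g*(a*a)*g⁻¹ = (g*a*g⁻¹)*(g*a*g⁻¹) by group, hga, hinvinv]
      have key : (1:G) = c * (c) := hc2.symm
      have key2 : c * (g*(c)*g⁻¹) = (1:G) := by rw [hV]; exact key.symm
      conv_lhs => rw [← key2]
      group
  have hFF : ∀ g : G, F (F g) = g := by
    intro g
    rcases Da g with hga | hga <;> rcases Db g with hgb | hgb
    · have e : F g = g := by rw [hF, ht1 g hga hgb, one_mul]
      rw [e, hF, ht1 g hga hgb, one_mul]
    · have e : F g = b*a⁻¹*g := by rw [hF, htA g hga hgb]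
      have cA' : (F g)*a*(F g)⁻¹ = a⁻¹ := by
        rw [e, show (b*a⁻¹*g)*a*(b*a⁻¹*g)⁻¹ = b*a⁻¹*(g*a*g⁻¹)*(b*a⁻¹)⁻¹ by group, hga, hJ1]
      have cB' : (F g)*b*(F g)⁻¹ = b := by
        rw [e, show (b*a⁻¹*g)*b*(b*a⁻¹*g)⁻¹ = b*a⁻¹*(g*b*g⁻¹)*(b*a⁻¹)⁻¹ by group, hgb, hJ2]
      rw [hF (F g), htB (F g) cA' cB', e]
      group
    · have e : F g = a*b⁻¹*g := by rw [hF, htB g hga hgb]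
      have cA' : (F g)*a*(F g)⁻¹ = a := by
        rw [e, show (a*b⁻¹*g)*a*(a*b⁻¹*g)⁻¹ = a*b⁻¹*(g*a*g⁻¹)*(a*b⁻¹)⁻¹ by group, hga, hJ3]
      have cB' : (F g)*b*(F g)⁻¹ = b⁻¹ := by
        rw [e, show (a*b⁻¹*g)*b*(a*b⁻¹*g)⁻¹ = a*b⁻¹*(g*b*g⁻¹)*(a*b⁻¹)⁻¹ by group, hgb, hJ4]
      rw [hF (F g), htA (F g) cA' cB', e]
      group
    · have e : F g = c*g := by rw [hF, htK g hga hgb]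
      have cA' : (F g)*a*(F g)⁻¹ = a⁻¹ := by
        rw [e, show (c*g)*a*(c*g)⁻¹ = c*(g*a*g⁻¹)*c⁻¹ by group, hga, hJ5]
      have cB' : (F g)*b*(F g)⁻¹ = b⁻¹ := by
        rw [e, show (c*g)*b*(c*g)⁻¹ = c*(g*b*g⁻¹)*c⁻¹ by group, hgb, hJ6]
      rw [hF (F g), htK (F g) cA' cB', e, ← mul_assoc, hc2, one_mul]
  let φ : MulAut G := ⟨⟨F, F, hFF, hFF⟩, hFmul⟩
  have hφ : ∀ x : G, φ x = F x := fun _ => rfl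
  have hFa : F a = b := by
    have c1 : a*a*a⁻¹ = a := by group
    have c2 : a*b*a⁻¹ = b⁻¹ := haba
    rw [hF, htA a c1 c2]
    group
  refine ⟨Subgroup.zpowers a, φ, ?_⟩
  intro hEq
  have hb_mem : b ∈ Subgroup.zpowers a := by
    rw [← hEq]
    refine ⟨a, Subgroup.mem_zpowers a, ?_⟩
    rw [show φ.toMonoidHom a = φ a from rfl, hφ, hFa]
  obtain ⟨k, hk⟩ := Subgroup.mem_zpowers_iff.mp hb_mem
  apply hab_ne
  rw [← hk]
  exact ((Commute.refl a).zpow_right k).eq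

end Q8Case


/-- A finite non-cyclic group has a subgroup which is not characteristic: there are a
subgroup `H ≤ G` and an automorphism `φ` of `G` with `φ(H) ≠ H`. -/
theorem exists_non_characteristic_subgroup {G : Type*} [Group G] [Finite G]
    (hG : ¬IsCyclic G) :
    ∃ (H : Subgroup G) (φ : MulAut G), H.map φ.toMonoidHom ≠ H := by
  classical
  by_cases habG : ∀ x y : G, x * y = y * x
  · letI : CommGroup G := { (inferInstance : Group G) with mul_comm := habG }
    exact abelian_case hG
  · push_neg at habG
    obtain ⟨x0, y0, hxy⟩ := habG
    by_cases hnorm : ∀ x g : G, g * x * g⁻¹ ∈ Subgroup.zpowers x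
    · obtain ⟨a, b, h1, h2, h3, h4⟩ := exists_q8 hnorm x0 y0 hxy
      exact q8_case hnorm a b h1 h2 h3 h4
    · push_neg at hnorm
      obtain ⟨x, g, hx⟩ := hnorm
      refine ⟨Subgroup.zpowers x, MulAut.conj g, ?_⟩
      intro hEq
      apply hx
      rw [← hEq]
      refine ⟨x, Subgroup.mem_zpowers x, ?_⟩
      show (MulAut.conj g) x = g * x * g⁻¹
      simp [MulAut.conj_apply]
end

section
/- Let G be a finite group, F a field, and A a subalgebra of the group algebra F[G]. Then A is a PS-ring if and only if A is closed under the Hadamard product ∘ and under the map x ↦ x^{(-1)}. -/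
open scoped Classical

noncomputable section

/-- The Hadamard (pointwise) product on the group algebra. -/
def had {F : Type*} [Field F] {G : Type*} [Group G] (x y : MonoidAlgebra F G) :
    MonoidAlgebra F G :=
  MonoidAlgebra.ofCoeff (Finsupp.zipWith (· * ·) (mul_zero 0) x.coeff y.coeff)

/-- `x ↦ x^{(-1)}`, sending `∑ a_g g` to `∑ a_g g⁻¹`. -/
def invol {F : Type*} [Field F] {G : Type*} [Group G] (x : MonoidAlgebra F G) :
    MonoidAlgebra F G :=
  MonoidAlgebra.ofCoeff (Finsupp.mapDomain (fun g => g⁻¹) x.coeff)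

/-- The simple quantity `C̄ = ∑_{g ∈ C} g` of a subset `C ⊆ G`. -/
def sqty (F : Type*) [Field F] {G : Type*} [Group G] [Fintype G] (C : Set G) :
    MonoidAlgebra F G :=
  ∑ g ∈ Finset.univ.filter (· ∈ C), MonoidAlgebra.single g (1 : F)

set_option linter.unusedSectionVars false

namespace PSAux
variable {F : Type*} [Field F] {G : Type*} [Group G] [Fintype G]

instance : CoeFun (MonoidAlgebra F G) (fun _ => G → F) := ⟨fun x => x.coeff⟩

lemma smul_apply (c : F) (x : MonoidAlgebra F G) (g : G) : (c • x) g = c * x g := rfl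
lemma sub_apply (x y : MonoidAlgebra F G) (g : G) : (x - y) g = x g - y g := rfl

lemma sqty_apply (C : Set G) (g : G) : sqty F C g = if g ∈ C then 1 else 0 := by
  unfold sqty; rw [MonoidAlgebra.coeff_sum, Finset.sum_apply']; simp [MonoidAlgebra.coeff_single, Finsupp.single_apply]

lemma had_apply (x y : MonoidAlgebra F G) (g : G) : had x y g = x g * y g := rfl

lemma invol_apply (x : MonoidAlgebra F G) (g : G) : invol x g = x g⁻¹ := by
  have := Finsupp.mapDomain_apply (f := fun g : G => g⁻¹) (by intro a b h; simpa using h) x.coeff g⁻¹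
  simpa [invol] using this

lemma finsupp_ext {x y : MonoidAlgebra F G} (h : ∀ g, x g = y g) : x = y := MonoidAlgebra.coeff_injective (Finsupp.ext h)

/-- the class of `g` -/
def cls (A : NonUnitalSubalgebra F (MonoidAlgebra F G)) (g : G) : Finset G :=
  Finset.univ.filter (fun h => ∀ x ∈ A, x g = x h)

def suppS (A : NonUnitalSubalgebra F (MonoidAlgebra F G)) : Set G :=
  {g | ∃ x ∈ A, x g ≠ 0}

def classes (A : NonUnitalSubalgebra F (MonoidAlgebra F G)) : Finset (Finset G) :=
  (Finset.univ.filter (fun g => g ∈ suppS A)).image (cls A)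

lemma mem_cls {A : NonUnitalSubalgebra F (MonoidAlgebra F G)} {g h : G} :
    h ∈ cls A g ↔ ∀ x ∈ A, x g = x h := by simp [cls]

lemma cls_self {A : NonUnitalSubalgebra F (MonoidAlgebra F G)} (g : G) : g ∈ cls A g :=
  mem_cls.mpr fun _ _ => rfl

lemma cls_eq_of_mem {A : NonUnitalSubalgebra F (MonoidAlgebra F G)} {g h : G}
    (hh : h ∈ cls A g) : cls A g = cls A h := by
  rw [mem_cls] at hh
  ext p
  simp only [mem_cls]
  constructor
  · intro hp x hx; rw [← hh x hx]; exact hp x hx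
  · intro hp x hx; rw [hh x hx]; exact hp x hx

lemma mem_suppS_of_cls {A : NonUnitalSubalgebra F (MonoidAlgebra F G)} {g h : G}
    (hg : g ∈ suppS A) (hh : h ∈ cls A g) : h ∈ suppS A := by
  obtain ⟨x, hx, hxg⟩ := hg
  exact ⟨x, hx, by rwa [← mem_cls.mp hh x hx]⟩

lemma sum_smul_sqty_apply {k : ℕ} (c : Fin k → F) (T : Fin k → Set G) (h : G) :
    (∑ j, c j • sqty F (T j)) h = ∑ j, c j * (if h ∈ T j then 1 else 0) := by
  rw [MonoidAlgebra.coeff_sum, Finset.sum_apply']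
  refine Finset.sum_congr rfl fun j _ => ?_
  rw [smul_apply, sqty_apply]

lemma backward (A : NonUnitalSubalgebra F (MonoidAlgebra F G))
    (hH : ∀ x ∈ A, ∀ y ∈ A, had x y ∈ A) (hI : ∀ x ∈ A, invol x ∈ A) :
    ∃ (k : ℕ) (T : Fin k → Set G),
    (∀ i, (T i).Nonempty) ∧
    (∀ i j, i ≠ j → Disjoint (T i) (T j)) ∧
    LinearIndependent F (fun i => sqty F (T i)) ∧
    (A : Set (MonoidAlgebra F G)) =
      (Submodule.span F (Set.range fun i => sqty F (T i)) : Set (MonoidAlgebra F G)) ∧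
    (∀ i, ∃ j, (fun g => g⁻¹) '' T i = T j) := by
  -- inversion facts
  have heqv_inv : ∀ g h : G, (∀ x ∈ A, x g = x h) → ∀ x ∈ A, x g⁻¹ = x h⁻¹ := by
    intro g h he x hx
    have := he (invol x) (hI x hx)
    rwa [invol_apply, invol_apply] at this
  have hcls_inv : ∀ g : G, cls A g⁻¹ = (cls A g).image (fun h => h⁻¹) := by
    intro g
    ext p
    simp only [Finset.mem_image, mem_cls]
    constructor
    · intro hp
      refine ⟨p⁻¹, ?_, inv_inv p⟩
      intro x hx
      have := heqv_inv _ _ hp x hx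
      simpa using this
    · rintro ⟨q, hq, rfl⟩
      intro x hx
      exact heqv_inv _ _ hq x hx
  have hsupp_inv : ∀ g : G, g ∈ suppS A → g⁻¹ ∈ suppS A := by
    rintro g ⟨x, hx, hxg⟩
    exact ⟨invol x, hI x hx, by rwa [invol_apply, inv_inv]⟩
  -- set up the classes
  set D := classes A with hD
  refine ⟨D.card, fun i => ((D.equivFin.symm i : Finset G) : Set G), ?_⟩
  set k := D.card
  set TF : Fin k → Finset G := fun i => (D.equivFin.symm i : Finset G) with hTF
  have hTFD : ∀ i, TF i ∈ D := fun i => (D.equivFin.symm i).2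
  have hTF_inj : Function.Injective TF := by
    intro i j hij
    have : D.equivFin.symm i = D.equivFin.symm j := Subtype.ext hij
    exact D.equivFin.symm.injective this
  have hex : ∀ i, ∃ g, g ∈ suppS A ∧ cls A g = TF i := by
    intro i
    have := hTFD i
    rw [hD, classes, Finset.mem_image] at this
    obtain ⟨g, hg, hcg⟩ := this
    exact ⟨g, (Finset.mem_filter.mp hg).2, hcg⟩
  choose rep hrepS hrepcl using hex
  have hrep_mem : ∀ i, rep i ∈ TF i := fun i => by rw [← hrepcl]; exact cls_self _
  have hne_rep : ∀ i j, i ≠ j → ¬ (∀ x ∈ A, x (rep i) = x (rep j)) := by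
    intro i j hij he
    apply hij
    apply hTF_inj
    rw [← hrepcl i, ← hrepcl j]
    exact cls_eq_of_mem (mem_cls.mpr he)
  -- membership characterization
  have hmemTF : ∀ (h : G) (i : Fin k), h ∈ TF i ↔ ∀ x ∈ A, x (rep i) = x h := by
    intro h i
    rw [← hrepcl i, mem_cls]
  -- each element of a class is in suppS
  have hTF_supp : ∀ (h : G) (i : Fin k), h ∈ TF i → h ∈ suppS A := by
    intro h i hh
    exact mem_suppS_of_cls (hrepS i) (by rwa [hrepcl])
  -- disjointness
  have hdisj : ∀ i j : Fin k, i ≠ j → Disjoint ((TF i : Set G)) ((TF j : Set G)) := by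
    intro i j hij
    rw [Set.disjoint_left]
    intro g hgi hgj
    apply hne_rep i j hij
    intro x hx
    rw [(hmemTF g i).mp hgi x hx, (hmemTF g j).mp hgj x hx]
  -- index of the class of an element of suppS
  have hidx : ∀ h : G, h ∈ suppS A → ∃ i : Fin k, (TF i : Finset G) = cls A h ∧ h ∈ TF i := by
    intro h hh
    have hmem : cls A h ∈ D := by
      rw [hD, classes, Finset.mem_image]
      exact ⟨h, Finset.mem_filter.mpr ⟨Finset.mem_univ h, hh⟩, rfl⟩
    refine ⟨D.equivFin ⟨cls A h, hmem⟩, ?_, ?_⟩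
    · show ((D.equivFin.symm (D.equivFin ⟨cls A h, hmem⟩) : Finset G)) = cls A h
      rw [Equiv.symm_apply_apply]
    · show h ∈ (D.equivFin.symm (D.equivFin ⟨cls A h, hmem⟩) : Finset G)
      rw [Equiv.symm_apply_apply]
      exact cls_self _
  -- representation formula
  have hrepf : ∀ z ∈ A, z = ∑ j, (z (rep j)) • sqty F ((TF j : Set G)) := by
    intro z hz
    apply finsupp_ext
    intro h
    rw [sum_smul_sqty_apply]
    by_cases hh : h ∈ suppS A
    · obtain ⟨i₀, hi₀, hhi₀⟩ := hidx h hh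
      rw [Finset.sum_eq_single i₀]
      · have : z (rep i₀) = z h := (hmemTF h i₀).mp hhi₀ z hz
        simp [Finset.mem_coe, hhi₀, this]
      · intro j _ hj
        have : h ∉ (TF j : Set G) := by
          intro hmem
          exact (Set.disjoint_left.mp (hdisj j i₀ hj)) hmem hhi₀
        simp [this]
      · intro habs; exact absurd (Finset.mem_univ i₀) habs
    · have hz0 : z h = 0 := by
        by_contra hne
        exact hh ⟨z, hz, hne⟩
      rw [hz0]
      symm
      apply Finset.sum_eq_zero
      intro j _
      have : h ∉ (TF j : Set G) := fun hmem => hh (hTF_supp h j hmem)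
      simp [this]
  -- the killing lemma
  have hkill : ∀ (s : Finset (Fin k)) (i : Fin k), i ∉ s →
      ∃ x ∈ A, x (rep i) ≠ 0 ∧ ∀ j ∈ s, x (rep j) = 0 := by
    intro s
    induction s using Finset.induction_on with
    | empty =>
      intro i _
      obtain ⟨x, hx, hxi⟩ := hrepS i
      exact ⟨x, hx, hxi, fun j hj => absurd hj (Finset.notMem_empty j)⟩
    | @insert a s ha ih =>
      intro i hi
      have hia : i ≠ a := fun h => hi (h ▸ Finset.mem_insert_self a s)
      have his : i ∉ s := fun h => hi (Finset.mem_insert_of_mem h)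
      obtain ⟨x, hx, hxi, hxs⟩ := ih i his
      have := hne_rep i a hia
      push_neg at this
      obtain ⟨w, hw, hwne⟩ := this
      refine ⟨had w x - (w (rep a)) • x, ?_, ?_, ?_⟩
      · exact A.sub_mem (hH w hw x hx) (A.smul_mem _ hx)
      · rw [sub_apply, had_apply, smul_apply]
        intro habs
        apply hwne
        have : (w (rep i) - w (rep a)) * x (rep i) = 0 := by ring_nf; ring_nf at habs; linear_combination habs
        rcases mul_eq_zero.mp this with h1 | h2
        · exact sub_eq_zero.mp h1
        · exact absurd h2 hxi
      · intro j hj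
        rcases Finset.mem_insert.mp hj with rfl | hjs
        · rw [sub_apply, had_apply, smul_apply]; ring
        · rw [sub_apply, had_apply, smul_apply, hxs j hjs]; ring
  -- indicators are in A
  have hsq_mem : ∀ i : Fin k, sqty F ((TF i : Set G)) ∈ A := by
    intro i
    obtain ⟨x, hx, hxi, hxj⟩ := hkill (Finset.univ.erase i) i (Finset.notMem_erase i _)
    have hz : (x (rep i))⁻¹ • x ∈ A := A.smul_mem _ hx
    have hco : ∀ j : Fin k, ((x (rep i))⁻¹ • x) (rep j) = if j = i then 1 else 0 := by
      intro j
      rw [smul_apply]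
      by_cases hji : j = i
      · subst hji; rw [if_pos rfl, inv_mul_cancel₀ hxi]
      · rw [if_neg hji, hxj j (Finset.mem_erase.mpr ⟨hji, Finset.mem_univ j⟩), mul_zero]
    have hsum : (∑ j, (((x (rep i))⁻¹ • x) (rep j)) • sqty F ((TF j : Set G)))
        = sqty F ((TF i : Set G)) := by
      rw [Finset.sum_eq_single i]
      · rw [hco i, if_pos rfl, one_smul]
      · intro j _ hj; rw [hco j, if_neg hj, zero_smul]
      · intro habs; exact absurd (Finset.mem_univ i) habs
    have heq : sqty F ((TF i : Set G)) = (x (rep i))⁻¹ • x := by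
      rw [← hsum]; exact (hrepf _ hz).symm
    rw [heq]
    exact hz
  refine ⟨fun i => ⟨rep i, hrep_mem i⟩, hdisj, ?_, ?_, ?_⟩
  · -- linear independence
    rw [Fintype.linearIndependent_iff]
    intro c hc i
    have := congrArg (fun z : MonoidAlgebra F G => z (rep i)) hc
    simp only at this
    rw [sum_smul_sqty_apply] at this
    rw [Finset.sum_eq_single i] at this
    · have hmem : rep i ∈ (TF i : Set G) := hrep_mem i
      rw [if_pos hmem, mul_one] at this
      simpa using this
    · intro j _ hj
      have : rep i ∉ (TF j : Set G) := by
        intro hmem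
        exact (Set.disjoint_left.mp (hdisj j i hj)) hmem (hrep_mem i)
      simp [this]
      exact fun hm => absurd hm this
    · intro habs; exact absurd (Finset.mem_univ i) habs
  · -- span equality
    apply Set.Subset.antisymm
    · intro z hz
      have := hrepf z hz
      rw [this]
      exact Submodule.sum_mem _ fun j _ =>
        Submodule.smul_mem _ _ (Submodule.subset_span ⟨j, rfl⟩)
    · intro z hz
      have hsub : Set.range (fun i => sqty F ((TF i : Set G))) ⊆ (A.toSubmodule : Set (MonoidAlgebra F G)) := by
        rintro _ ⟨i, rfl⟩
        exact hsq_mem i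
      have hle : Submodule.span F (Set.range fun i => sqty F ((TF i : Set G))) ≤ A.toSubmodule :=
        Submodule.span_le.mpr hsub
      exact hle hz
  · -- closure under inversion
    intro i
    have h1 : (fun g => g⁻¹) '' (TF i : Set G) = ((cls A ((rep i)⁻¹) : Finset G) : Set G) := by
      rw [hcls_inv (rep i), hrepcl i]
      ext p
      simp [Finset.mem_image, Set.mem_image]
    have h2 : (rep i)⁻¹ ∈ suppS A := hsupp_inv _ (hrepS i)
    obtain ⟨j, hj, _⟩ := hidx _ h2
    exact ⟨j, by rw [h1, ← hj]⟩


lemma had_sqty (C D : Set G) : had (sqty F C) (sqty F D) = sqty F (C ∩ D) := by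
  apply finsupp_ext; intro g
  rw [had_apply, sqty_apply, sqty_apply, sqty_apply]
  by_cases h1 : g ∈ C <;> by_cases h2 : g ∈ D <;> simp [h1, h2]

lemma add_apply (x y : MonoidAlgebra F G) (g : G) : (x + y) g = x g + y g := rfl
lemma zero_apply (g : G) : (0 : MonoidAlgebra F G) g = 0 := rfl

lemma sqty_empty : sqty F (∅ : Set G) = 0 := by
  apply finsupp_ext; intro g; rw [sqty_apply, zero_apply]; simp

lemma invol_sqty (C : Set G) : invol (sqty F C) = sqty F ((fun g => g⁻¹) '' C) := by
  apply finsupp_ext; intro g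
  rw [invol_apply, sqty_apply, sqty_apply]
  have h : g⁻¹ ∈ C ↔ g ∈ (fun g => g⁻¹) '' C := by
    constructor
    · intro h; exact ⟨g⁻¹, h, by simp⟩
    · rintro ⟨h, hh, rfl⟩; simpa using hh
  by_cases hc : g⁻¹ ∈ C
  · simp [hc, h.mp hc]
  · simp [hc, fun hx => hc (h.mpr hx)]

lemma had_add_left (x y z : MonoidAlgebra F G) : had (x + y) z = had x z + had y z := by
  apply finsupp_ext; intro g
  rw [add_apply, had_apply, had_apply, had_apply, add_apply]; ring

lemma had_add_right (x y z : MonoidAlgebra F G) : had x (y + z) = had x y + had x z := by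
  apply finsupp_ext; intro g
  rw [add_apply, had_apply, had_apply, had_apply, add_apply]; ring

lemma had_smul_left (c : F) (x y : MonoidAlgebra F G) : had (c • x) y = c • had x y := by
  apply finsupp_ext; intro g
  rw [had_apply, smul_apply, smul_apply, had_apply]; ring

lemma had_smul_right (c : F) (x y : MonoidAlgebra F G) : had x (c • y) = c • had x y := by
  apply finsupp_ext; intro g
  rw [had_apply, smul_apply, smul_apply, had_apply]; ring

lemma had_zero_left (y : MonoidAlgebra F G) : had 0 y = 0 := by
  apply finsupp_ext; intro g; rw [had_apply, zero_apply]; ring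

lemma had_zero_right (y : MonoidAlgebra F G) : had y 0 = 0 := by
  apply finsupp_ext; intro g; rw [had_apply, zero_apply]; ring

lemma invol_add (x y : MonoidAlgebra F G) : invol (x + y) = invol x + invol y := by
  apply finsupp_ext; intro g; rw [add_apply, invol_apply, invol_apply, invol_apply, add_apply]

lemma invol_smul (c : F) (x : MonoidAlgebra F G) : invol (c • x) = c • invol x := by
  apply finsupp_ext; intro g; rw [smul_apply, invol_apply, invol_apply, smul_apply]

lemma invol_zero : invol (0 : MonoidAlgebra F G) = 0 := by
  apply finsupp_ext; intro g; rw [invol_apply, zero_apply, zero_apply]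

/-- Forward direction. -/
lemma forward (A : NonUnitalSubalgebra F (MonoidAlgebra F G))
    (k : ℕ) (T : Fin k → Set G)
    (hdisj : ∀ i j, i ≠ j → Disjoint (T i) (T j))
    (hspan : (A : Set (MonoidAlgebra F G)) =
      (Submodule.span F (Set.range fun i => sqty F (T i)) : Set (MonoidAlgebra F G)))
    (hinv : ∀ i, ∃ j, (fun g => g⁻¹) '' T i = T j) :
    (∀ x ∈ A, ∀ y ∈ A, had x y ∈ A) ∧ (∀ x ∈ A, invol x ∈ A) := by
  set M : Submodule F (MonoidAlgebra F G) :=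
    Submodule.span F (Set.range fun i => sqty F (T i)) with hM
  have hmem : ∀ z : MonoidAlgebra F G, z ∈ A ↔ z ∈ M := by
    intro z
    constructor
    · intro hz; have : z ∈ (A : Set (MonoidAlgebra F G)) := hz
      rw [hspan] at this; exact this
    · intro hz; have : z ∈ (M : Set (MonoidAlgebra F G)) := hz
      rw [← hspan] at this; exact this
  constructor
  · intro x hx y hy
    rw [hmem] at hx hy ⊢
    induction hx using Submodule.span_induction with
    | mem a ha =>
      induction hy using Submodule.span_induction with
      | mem b hb =>
        obtain ⟨i, rfl⟩ := ha
        obtain ⟨j, rfl⟩ := hb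
        rw [had_sqty]
        by_cases hij : i = j
        · subst hij
          rw [Set.inter_self]
          exact Submodule.subset_span ⟨i, rfl⟩
        · rw [Set.disjoint_iff_inter_eq_empty.mp (hdisj i j hij), sqty_empty]
          exact M.zero_mem
      | zero => rw [had_zero_right]; exact M.zero_mem
      | add b c hb hc ihb ihc => rw [had_add_right]; exact M.add_mem ihb ihc
      | smul c b hb ihb => rw [had_smul_right]; exact M.smul_mem c ihb
    | zero => rw [had_zero_left]; exact M.zero_mem
    | add a b ha hb iha ihb => rw [had_add_left]; exact M.add_mem iha ihb
    | smul c a ha iha => rw [had_smul_left]; exact M.smul_mem c iha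
  · intro x hx
    rw [hmem] at hx ⊢
    induction hx using Submodule.span_induction with
    | mem a ha =>
      obtain ⟨i, rfl⟩ := ha
      rw [invol_sqty]
      obtain ⟨j, hj⟩ := hinv i
      rw [hj]
      exact Submodule.subset_span ⟨j, rfl⟩
    | zero => rw [invol_zero]; exact M.zero_mem
    | add a b ha hb iha ihb => rw [invol_add]; exact M.add_mem iha ihb
    | smul c a ha iha => rw [invol_smul]; exact M.smul_mem c iha

end PSAux

/-- A (not necessarily unital) subalgebra `A` of `F[G]` is a pseudo-S-ring if there are
disjoint nonempty subsets `T_1, …, T_k` of `G` whose simple quantities form an `F`-basis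
of `A` (linearly independent and spanning), such that each `T_i^{(-1)}` is some `T_j`. -/
def IsPSRing {F : Type*} [Field F] {G : Type*} [Group G] [Fintype G]
    (A : NonUnitalSubalgebra F (MonoidAlgebra F G)) : Prop :=
  ∃ (k : ℕ) (T : Fin k → Set G),
    (∀ i, (T i).Nonempty) ∧
    (∀ i j, i ≠ j → Disjoint (T i) (T j)) ∧
    LinearIndependent F (fun i => sqty F (T i)) ∧
    (A : Set (MonoidAlgebra F G)) =
      (Submodule.span F (Set.range fun i => sqty F (T i)) : Set (MonoidAlgebra F G)) ∧
    (∀ i, ∃ j, (fun g => g⁻¹) '' T i = T j)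

/-- A subalgebra `A` of `F[G]` is a PS-ring if and only if `A` is closed under the
Hadamard product and under `x ↦ x^{(-1)}`. -/
theorem isPSRing_iff_closed {F : Type*} [Field F] {G : Type*} [Group G] [Fintype G]
    (A : NonUnitalSubalgebra F (MonoidAlgebra F G)) :
    IsPSRing A ↔ ((∀ x ∈ A, ∀ y ∈ A, had x y ∈ A) ∧ (∀ x ∈ A, invol x ∈ A)) := by
  constructor
  · rintro ⟨k, T, _, hdisj, _, hspan, hinv⟩
    exact PSAux.forward A k T hdisj hspan hinv
  · rintro ⟨hH, hI⟩
    exact PSAux.backward A hH hI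
end
end

section
/- Let G be a finite group, F a field, and A a subalgebra of the group algebra F[G]. Then A is an S-ring if and only if A is closed under the Hadamard product ∘ and under the map x ↦ x^{(-1)}, and A contains both 1 and Ḡ. -/
open scoped Classical

noncomputable section

/-- A (not necessarily unital) subalgebra `A` of `F[G]` is an S-ring if there are disjoint
nonempty subsets `T_1, …, T_k` of `G` whose simple quantities form an `F`-basis of `A`,
such that some `T_i` is `{1}`, the `T_i` cover `G`, and each `T_i^{(-1)}` is some `T_j`. -/
def IsSRingComb {F : Type*} [Field F] {G : Type*} [Group G] [Fintype G]
    (A : NonUnitalSubalgebra F (MonoidAlgebra F G)) : Prop :=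
  ∃ (k : ℕ) (T : Fin k → Set G),
    (∀ i, (T i).Nonempty) ∧
    (∀ i j, i ≠ j → Disjoint (T i) (T j)) ∧
    LinearIndependent F (fun i => sqty F (T i)) ∧
    (A : Set (MonoidAlgebra F G)) =
      (Submodule.span F (Set.range fun i => sqty F (T i)) : Set (MonoidAlgebra F G)) ∧
    (∃ i, T i = ({1} : Set G)) ∧
    (⋃ i, T i) = (Set.univ : Set G) ∧
    (∀ i, ∃ j, (fun g => g⁻¹) '' T i = T j)

set_option linter.unusedSectionVars false

instance monoidAlgebraCoeFunAux {F : Type*} [Field F] {G : Type*} [Group G] :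
    CoeFun (MonoidAlgebra F G) (fun _ => G → F) :=
  ⟨fun x => ⇑x.coeff⟩

section Helpers
variable {F : Type*} [Field F] {G : Type*} [Group G] [Fintype G]

lemma had_apply (x y : MonoidAlgebra F G) (g : G) : had x y g = x g * y g := rfl

lemma invol_apply (x : MonoidAlgebra F G) (g : G) : invol x g = x g⁻¹ := by
  have : (fun g : G => g⁻¹) = ⇑(Equiv.inv G) := rfl
  rw [invol, MonoidAlgebra.coeff_ofCoeff, this, Finsupp.mapDomain_equiv_apply]
  rfl

lemma sqty_apply (C : Set G) (h : G) : sqty F C h = if h ∈ C then 1 else 0 := by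
  rw [sqty, MonoidAlgebra.coeff_sum, Finsupp.finset_sum_apply]
  simp [MonoidAlgebra.coeff_single, Finsupp.single_apply]

lemma one_apply' (h : G) : (1 : MonoidAlgebra F G) h = if h = 1 then 1 else 0 := by
  rw [MonoidAlgebra.one_def, MonoidAlgebra.coeff_single, Finsupp.single_apply]
  simp [eq_comm]

lemma invol_sqty (C : Set G) : invol (sqty F C) = sqty F ((fun g => g⁻¹) '' C) := by
  ext h
  rw [invol_apply, sqty_apply, sqty_apply]
  congr 1
  simp only [eq_iff_iff, Set.mem_image]
  constructor
  · exact fun hc => ⟨h⁻¹, hc, inv_inv h⟩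
  · rintro ⟨g, hg, rfl⟩; rwa [inv_inv]

lemma add_apply' (x y : MonoidAlgebra F G) (h : G) : (x + y) h = x h + y h := rfl

lemma smul_apply' (c : F) (x : MonoidAlgebra F G) (h : G) : (c • x) h = c * x h := rfl

lemma zero_apply' (h : G) : (0 : MonoidAlgebra F G) h = 0 := rfl

lemma sub_apply' (x y : MonoidAlgebra F G) (h : G) : (x - y) h = x h - y h := rfl

lemma invol_add (x y : MonoidAlgebra F G) : invol (x + y) = invol x + invol y := by
  ext h; rw [add_apply', invol_apply, invol_apply, invol_apply, add_apply']

lemma invol_smul (c : F) (x : MonoidAlgebra F G) : invol (c • x) = c • invol x := by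
  ext h; rw [smul_apply', invol_apply, invol_apply, smul_apply']

lemma invol_zero : invol (0 : MonoidAlgebra F G) = 0 := by
  ext h; simp [invol_apply]

end Helpers

section Back
variable {F : Type*} [Field F] {G : Type*} [Group G] [Fintype G]

theorem closed_isSRing (A : NonUnitalSubalgebra F (MonoidAlgebra F G))
    (hhad : ∀ x ∈ A, ∀ y ∈ A, had x y ∈ A) (hinv : ∀ x ∈ A, invol x ∈ A)
    (hone : (1 : MonoidAlgebra F G) ∈ A) (huniv : sqty F (Set.univ : Set G) ∈ A) :
    IsSRingComb A := by
  classical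
  set r : G → G → Prop := fun g h => ∀ x ∈ A, (x : MonoidAlgebra F G) g = x h with hr
  have requiv : Equivalence r :=
    ⟨fun g x hx => rfl, fun h x hx => (h x hx).symm, fun h1 h2 x hx => (h1 x hx).trans (h2 x hx)⟩
  set s : Setoid G := ⟨r, requiv⟩ with hs
  haveI : Fintype (Quotient s) := Quotient.fintype s
  set C : Quotient s → Set G := fun q => {h | Quotient.mk s h = q} with hC
  have hrel : ∀ g h : G, Quotient.mk s g = Quotient.mk s h → r g h :=
    fun g h hq => Quotient.exact hq
  have hsound : ∀ g h : G, r g h → Quotient.mk s g = Quotient.mk s h :=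
    fun g h hq => Quotient.sound hq
  have hout : ∀ h : G, r h (Quotient.mk s h).out :=
    fun h => hrel _ _ (by rw [Quotient.out_eq])
  -- the indicator of each class lies in A
  have hind : ∀ q : Quotient s, sqty F (C q) ∈ A := by
    intro q
    have hsep : ∀ q' : Quotient s, ∃ x ∈ A, q' ≠ q → x q.out ≠ x q'.out := by
      intro q'
      by_cases hq' : q' = q
      · exact ⟨sqty F Set.univ, huniv, fun h => absurd hq' h⟩
      · by_contra hcon
        push_neg at hcon
        have hrq : r q.out q'.out := fun x hx => (hcon x hx).2
        have := hsound _ _ hrq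
        rw [Quotient.out_eq, Quotient.out_eq] at this
        exact hq' this.symm
    choose x hxA hxne using hsep
    set y : Quotient s → MonoidAlgebra F G := fun q' =>
      (x q' q.out - x q' q'.out)⁻¹ • (x q' - (x q' q'.out) • sqty F Set.univ) with hy
    have hyA : ∀ q', y q' ∈ A :=
      fun q' => SMulMemClass.smul_mem _ (sub_mem (hxA q') (SMulMemClass.smul_mem _ huniv))
    have hyval : ∀ q' h, y q' h = (x q' q.out - x q' q'.out)⁻¹ * (x q' h - x q' q'.out) := by
      intro q' h
      rw [hy]
      rw [smul_apply', sub_apply', smul_apply', sqty_apply]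
      rw [if_pos (Set.mem_univ h), mul_one]
    have hy1 : ∀ q', q' ≠ q → y q' q.out = 1 := by
      intro q' hq'
      rw [hyval]
      exact inv_mul_cancel₀ (sub_ne_zero.mpr (hxne q' hq'))
    have hy0 : ∀ (q' : Quotient s) (h : G), Quotient.mk s h = q' → y q' h = 0 := by
      intro q' h hh
      have : x q' h = x q' q'.out := by
        have := hout h; rw [hh] at this
        exact this (x q') (hxA q')
      rw [hyval, this, sub_self, mul_zero]
    have hprod : ∀ t : Finset (Quotient s), ∃ z ∈ A, ∀ h, z h = ∏ q' ∈ t, y q' h := by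
      intro t
      induction t using Finset.induction with
      | empty =>
        exact ⟨sqty F Set.univ, huniv, fun h => by
          rw [sqty_apply, if_pos (Set.mem_univ h), Finset.prod_empty]⟩
      | @insert a t ha ih =>
        obtain ⟨z, hzA, hz⟩ := ih
        refine ⟨had (y a) z, hhad _ (hyA a) _ hzA, fun h => ?_⟩
        rw [had_apply, hz, Finset.prod_insert ha]
    obtain ⟨z, hzA, hz⟩ := hprod (Finset.univ.erase q)
    have hzeq : z = sqty F (C q) := by
      ext h
      rw [sqty_apply, hz]
      by_cases hh : Quotient.mk s h = q
      · rw [if_pos (show h ∈ C q from hh)]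
        apply Finset.prod_eq_one
        intro q' hq'
        have hq'ne : q' ≠ q := (Finset.mem_erase.mp hq').1
        have hrh : r h q.out := by
          have := hout h; rwa [hh] at this
        rw [hrh (y q') (hyA q'), hy1 q' hq'ne]
      · rw [if_neg (show h ∉ C q from hh)]
        exact Finset.prod_eq_zero
          (Finset.mem_erase.mpr ⟨hh, Finset.mem_univ _⟩) (hy0 _ h rfl)
    rwa [hzeq] at hzA
  -- span equality
  have hspan : (A : Set (MonoidAlgebra F G)) =
      (Submodule.span F (Set.range fun q : Quotient s => sqty F (C q)) :
        Set (MonoidAlgebra F G)) := by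
    apply Set.Subset.antisymm
    · intro v hv
      have hveq : v = ∑ q : Quotient s, (v q.out) • sqty F (C q) := by
        ext h
        rw [MonoidAlgebra.coeff_sum, Finsupp.finset_sum_apply]
        have hterm : ∀ q : Quotient s,
            ((v q.out) • sqty F (C q)) h = if Quotient.mk s h = q then v q.out else 0 := by
          intro q
          rw [smul_apply', sqty_apply]
          by_cases hq : Quotient.mk s h = q
          · rw [if_pos (show h ∈ C q from hq), if_pos hq, mul_one]
          · rw [if_neg (show h ∉ C q from hq), if_neg hq, mul_zero]
        rw [Finset.sum_congr rfl (fun q _ => hterm q), Finset.sum_ite_eq,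
          if_pos (Finset.mem_univ _)]
        exact (hout h) v hv
      rw [SetLike.mem_coe, hveq] at *
      exact Submodule.sum_mem _ fun q _ =>
        Submodule.smul_mem _ _ (Submodule.subset_span ⟨q, rfl⟩)
    · intro v hv
      rw [SetLike.mem_coe] at hv ⊢
      refine Submodule.span_le (p := A.toSubmodule) |>.mpr ?_ hv
      rintro _ ⟨q, rfl⟩
      exact hind q
  -- linear independence
  have hli : LinearIndependent F (fun q : Quotient s => sqty F (C q)) := by
    rw [Fintype.linearIndependent_iff]
    intro c hc q
    have heval := congrArg (fun v : MonoidAlgebra F G => v q.out) hc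
    simp only [zero_apply'] at heval
    rw [MonoidAlgebra.coeff_sum, Finsupp.finset_sum_apply] at heval
    have hterm : ∀ q' : Quotient s,
        (c q' • sqty F (C q')) q.out = if Quotient.mk s q.out = q' then c q' else 0 := by
      intro q'
      rw [smul_apply', sqty_apply]
      by_cases hq : Quotient.mk s q.out = q'
      · rw [if_pos (show q.out ∈ C q' from hq), if_pos hq, mul_one]
      · rw [if_neg (show q.out ∉ C q' from hq), if_neg hq, mul_zero]
    rw [Finset.sum_congr rfl (fun q' _ => hterm q'), Finset.sum_ite_eq,
      if_pos (Finset.mem_univ _), Quotient.out_eq] at heval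
    exact heval
  -- package via Fin k
  set e : Fin (Fintype.card (Quotient s)) ≃ Quotient s := (Fintype.equivFin (Quotient s)).symm
    with he
  refine ⟨Fintype.card (Quotient s), fun i => C (e i), ?_, ?_, ?_, ?_, ?_, ?_, ?_⟩
  · intro i
    exact ⟨(e i).out, by rw [hC]; exact Quotient.out_eq _⟩
  · intro i j hij
    rw [Set.disjoint_left]
    intro h h1 h2
    exact hij (e.injective ((show Quotient.mk s h = e i from h1).symm.trans h2))
  · exact hli.comp e e.injective
  · rw [hspan]
    show _ = (Submodule.span F (Set.range fun i => sqty F (C (e i))) :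
      Set (MonoidAlgebra F G))
    have hre : (Set.range fun i => sqty F (C (e i))) =
        Set.range fun q : Quotient s => sqty F (C q) :=
      e.surjective.range_comp fun q => sqty F (C q)
    rw [hre]
  · refine ⟨e.symm (Quotient.mk s 1), ?_⟩
    show C (e (e.symm (Quotient.mk s 1))) = {1}
    rw [Equiv.apply_symm_apply]
    ext h
    simp only [hC, Set.mem_setOf_eq, Set.mem_singleton_iff]
    constructor
    · intro hh
      have h1 := hrel _ _ hh (1 : MonoidAlgebra F G) hone
      rw [one_apply', one_apply', if_pos rfl] at h1
      by_cases heq : h = 1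
      · exact heq
      · rw [if_neg heq] at h1
        exact absurd h1 zero_ne_one
    · rintro rfl; rfl
  · ext g
    simp only [Set.mem_iUnion, Set.mem_univ, iff_true]
    exact ⟨e.symm (Quotient.mk s g), by rw [hC]; simp only [Set.mem_setOf_eq,
      Equiv.apply_symm_apply]⟩
  · intro i
    refine ⟨e.symm (Quotient.mk s ((e i).out)⁻¹), ?_⟩
    show (fun g => g⁻¹) '' C (e i) = C (e (e.symm (Quotient.mk s ((e i).out)⁻¹)))
    rw [Equiv.apply_symm_apply]
    have hrinv : ∀ a b : G, r a b → r a⁻¹ b⁻¹ := by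
      intro a b hab z hz
      have := hab (invol z) (hinv z hz)
      rwa [invol_apply, invol_apply] at this
    ext h
    simp only [hC, Set.mem_image, Set.mem_setOf_eq]
    constructor
    · rintro ⟨g, hg, rfl⟩
      apply hsound
      have : r g (e i).out := hrel _ _ (by rw [hg, Quotient.out_eq])
      exact hrinv _ _ this
    · intro hh
      refine ⟨h⁻¹, ?_, inv_inv h⟩
      rw [← Quotient.out_eq (e i)]
      apply hsound
      have : r h ((e i).out)⁻¹ := hrel _ _ (by rw [hh])
      have := hrinv _ _ this
      rwa [inv_inv] at this

end Back

section Fwd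
variable {F : Type*} [Field F] {G : Type*} [Group G] [Fintype G]

lemma had_zero_left (y : MonoidAlgebra F G) : had 0 y = 0 := by
  ext g; rw [had_apply, zero_apply', zero_mul]

lemma had_zero_right (x : MonoidAlgebra F G) : had x 0 = 0 := by
  ext g; rw [had_apply, zero_apply', mul_zero]

lemma had_add_left (x y z : MonoidAlgebra F G) : had (x + y) z = had x z + had y z := by
  ext g; rw [add_apply', had_apply, had_apply, had_apply, add_apply', add_mul]

lemma had_add_right (x y z : MonoidAlgebra F G) : had x (y + z) = had x y + had x z := by
  ext g; rw [add_apply', had_apply, had_apply, had_apply, add_apply', mul_add]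

lemma had_smul_left (c : F) (x y : MonoidAlgebra F G) : had (c • x) y = c • had x y := by
  ext g; rw [smul_apply', had_apply, had_apply, smul_apply', mul_assoc]

lemma had_smul_right (c : F) (x y : MonoidAlgebra F G) : had x (c • y) = c • had x y := by
  ext g
  rw [smul_apply', had_apply, had_apply, smul_apply', mul_left_comm]

theorem isSRing_closed (A : NonUnitalSubalgebra F (MonoidAlgebra F G)) (h : IsSRingComb A) :
    (∀ x ∈ A, ∀ y ∈ A, had x y ∈ A) ∧ (∀ x ∈ A, invol x ∈ A) ∧
      (1 : MonoidAlgebra F G) ∈ A ∧ sqty F (Set.univ : Set G) ∈ A := by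
  obtain ⟨k, T, hne, hdisj, hli, hspan, ⟨i0, hT1⟩, hcover, hinvT⟩ := h
  set S : Set (MonoidAlgebra F G) := Set.range fun i => sqty F (T i) with hS
  have hmem : ∀ v : MonoidAlgebra F G, v ∈ A ↔ v ∈ Submodule.span F S := by
    intro v
    rw [← SetLike.mem_coe, hspan, SetLike.mem_coe]
  have hgen : ∀ u ∈ S, ∀ v ∈ S, had u v ∈ Submodule.span F S := by
    rintro _ ⟨i, rfl⟩ _ ⟨j, rfl⟩
    by_cases hij : i = j
    · subst hij
      have heq : had (sqty F (T i)) (sqty F (T i)) = sqty F (T i) := by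
        ext g
        rw [had_apply, sqty_apply]
        split_ifs <;> simp
      rw [heq]
      exact Submodule.subset_span ⟨i, rfl⟩
    · have heq : had (sqty F (T i)) (sqty F (T j)) = 0 := by
        ext g
        rw [had_apply, sqty_apply, sqty_apply, zero_apply']
        by_cases h1 : g ∈ T i
        · rw [if_pos h1, if_neg (fun h2 => Set.disjoint_left.mp (hdisj i j hij) h1 h2), mul_zero]
        · rw [if_neg h1, zero_mul]
      rw [heq]
      exact Submodule.zero_mem _
  refine ⟨?_, ?_, ?_, ?_⟩
  · intro u hu v hv
    rw [hmem] at hu hv ⊢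
    refine Submodule.span_induction
      (p := fun u _ => ∀ v, v ∈ Submodule.span F S → had u v ∈ Submodule.span F S)
      ?_ ?_ ?_ ?_ hu v hv
    · intro u hu v hv
      refine Submodule.span_induction
        (p := fun v _ => had u v ∈ Submodule.span F S) ?_ ?_ ?_ ?_ hv
      · intro v hv; exact hgen _ hu _ hv
      · show had u 0 ∈ Submodule.span F S
        rw [had_zero_right]; exact Submodule.zero_mem _
      · intro v w _ _ ihv ihw; rw [had_add_right]; exact Submodule.add_mem _ ihv ihw
      · intro c v _ ihv; rw [had_smul_right]; exact Submodule.smul_mem _ _ ihv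
    · intro v hv; rw [had_zero_left]; exact Submodule.zero_mem _
    · intro u w _ _ ihu ihw v hv
      rw [had_add_left]; exact Submodule.add_mem _ (ihu v hv) (ihw v hv)
    · intro c u _ ihu v hv
      rw [had_smul_left]; exact Submodule.smul_mem _ _ (ihu v hv)
  · intro u hu
    rw [hmem] at hu ⊢
    induction hu using Submodule.span_induction with
    | mem u hu =>
      obtain ⟨i, rfl⟩ := hu
      obtain ⟨j, hj⟩ := hinvT i
      rw [invol_sqty, hj]
      exact Submodule.subset_span ⟨j, rfl⟩
    | zero => rw [invol_zero]; exact Submodule.zero_mem _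
    | add u w _ _ ihu ihw => rw [invol_add]; exact Submodule.add_mem _ ihu ihw
    | smul c u _ ihu => rw [invol_smul]; exact Submodule.smul_mem _ _ ihu
  · rw [hmem]
    have heq : (1 : MonoidAlgebra F G) = sqty F (T i0) := by
      rw [hT1]
      ext g
      rw [sqty_apply, one_apply']
      simp
    rw [heq]
    exact Submodule.subset_span ⟨i0, rfl⟩
  · rw [hmem]
    have heq : sqty F (Set.univ : Set G) = ∑ i, sqty F (T i) := by
      ext g
      rw [MonoidAlgebra.coeff_sum, Finsupp.finset_sum_apply, sqty_apply, if_pos (Set.mem_univ g)]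
      have hg : ∃ i, g ∈ T i :=
        Set.mem_iUnion.mp (by rw [hcover]; exact Set.mem_univ g)
      obtain ⟨i1, hi1⟩ := hg
      rw [Finset.sum_eq_single_of_mem i1 (Finset.mem_univ _)]
      · rw [sqty_apply, if_pos hi1]
      · intro j _ hj
        rw [sqty_apply, if_neg (fun hTj => Set.disjoint_left.mp (hdisj j i1 hj) hTj hi1)]
    rw [heq]
    exact Submodule.sum_mem _ fun i _ => Submodule.subset_span ⟨i, rfl⟩

end Fwd


/-- A subalgebra `A` of `F[G]` is an S-ring if and only if `A` is closed under the Hadamard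
product and under `x ↦ x^{(-1)}`, and contains both `1` and `Ḡ`. -/
theorem isSRing_iff_closed {F : Type*} [Field F] {G : Type*} [Group G] [Fintype G]
    (A : NonUnitalSubalgebra F (MonoidAlgebra F G)) :
    IsSRingComb A ↔ ((∀ x ∈ A, ∀ y ∈ A, had x y ∈ A) ∧ (∀ x ∈ A, invol x ∈ A) ∧
      (1 : MonoidAlgebra F G) ∈ A ∧ sqty F (Set.univ : Set G) ∈ A) := by
  constructor
  · exact isSRing_closed A
  · rintro ⟨h1, h2, h3, h4⟩
    exact closed_isSRing A h1 h2 h3 h4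
end
end

section
/- For every element g of G = Z_{p^{λ_1}} × ⋯ × Z_{p^{λ_n}} there is exactly one canonical tuple a = (a_1,…,a_n) (with 0 ≤ a_i ≤ λ_i for all i) such that the Aut(G)-orbit of g contains an element of type T(a); i.e., every automorphism class of G contains a unique canonical type. -/
/-- A tuple `a` is canonical (w.r.t. `λ`) if `a_i ≤ a_{i+1}` and
`a_{i+1} − a_i ≤ λ_{i+1} − λ_i` for all consecutive indices. -/
def Canonical {n : ℕ} (lam a : Fin n → ℕ) : Prop :=
  ∀ i j : Fin n, (j : ℕ) = (i : ℕ) + 1 → a i ≤ a j ∧ a j + lam i ≤ a i + lam j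

/-- The type `T(a)`: elements of `G = Z_{p^{λ_1}} × ⋯ × Z_{p^{λ_n}}` whose `i`-th component
has order exactly `p^{a_i}` for every `i`. -/
def TypeSet (p : ℕ) {n : ℕ} (lam : Fin n → ℕ) (a : Fin n → ℕ) :
    Set (∀ i : Fin n, ZMod (p ^ lam i)) :=
  {g | ∀ i, addOrderOf (g i) = p ^ a i}

section ZModOrder
variable {p : ℕ} (hp : p.Prime)

-- any element of ZMod (p^λ) has p-power order
lemma exists_order (hp : p.Prime) {lam : ℕ} (x : ZMod (p ^ lam)) :
    ∃ b ≤ lam, addOrderOf x = p ^ b := by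
  have hne : (p : ℕ) ^ lam ≠ 0 := pow_ne_zero _ hp.pos.ne'
  haveI : NeZero (p ^ lam) := ⟨hne⟩
  have hdvd : addOrderOf x ∣ p ^ lam := by
    have := ZMod.natCast_rightInverse (n := p ^ lam) x
    calc addOrderOf x = addOrderOf ((x.val : ZMod (p ^ lam))) := by rw [this]
      _ ∣ p ^ lam := by
        rw [ZMod.addOrderOf_coe _ hne]
        exact Nat.div_dvd_of_dvd (Nat.gcd_dvd_left _ _)
  obtain ⟨b, hb, h⟩ := (Nat.dvd_prime_pow hp).mp hdvd
  exact ⟨b, hb, h⟩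

lemma gcd_of_order (hp : p.Prime) {lam b : ℕ} (x : ZMod (p ^ lam))
    (hb : b ≤ lam) (h : addOrderOf x = p ^ b) :
    Nat.gcd (p ^ lam) x.val = p ^ (lam - b) := by
  have hne : (p : ℕ) ^ lam ≠ 0 := pow_ne_zero _ hp.pos.ne'
  haveI : NeZero (p ^ lam) := ⟨hne⟩
  have hx : ((x.val : ZMod (p ^ lam))) = x := ZMod.natCast_rightInverse x
  rw [← hx, ZMod.addOrderOf_coe _ hne] at h
  have hg : Nat.gcd (p ^ lam) x.val ∣ p ^ lam := Nat.gcd_dvd_left _ _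
  have hgpos : 0 < Nat.gcd (p ^ lam) x.val := Nat.pos_of_dvd_of_pos hg (Nat.pos_of_ne_zero hne)
  have := Nat.div_mul_cancel hg
  rw [h] at this
  -- p ^ b * gcd = p ^ lam
  have : Nat.gcd (p ^ lam) x.val * p ^ b = p ^ lam := by rw [mul_comm]; exact this
  have hpl : p ^ (lam - b) * p ^ b = p ^ lam := by
    rw [← pow_add, Nat.sub_add_cancel hb]
  have hpb : 0 < p ^ b := pow_pos hp.pos _
  exact Nat.eq_of_mul_eq_mul_right hpb (this.trans hpl.symm)
end ZModOrder

section MoreOrder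
variable {p : ℕ}

lemma le_of_nsmul_eq_zero (hp : p.Prime) {A : Type*} [AddMonoid A] {x : A} {a k : ℕ}
    (hx : addOrderOf x = p ^ a) (h : p ^ k • x = 0) : a ≤ k := by
  have : addOrderOf x ∣ p ^ k := addOrderOf_dvd_of_nsmul_eq_zero h
  rw [hx] at this
  exact (Nat.pow_dvd_pow_iff_le_right hp.one_lt).mp this

lemma nsmul_eq_zero_of_le (hp : p.Prime) {A : Type*} [AddMonoid A] {x : A} {a k : ℕ}
    (hx : addOrderOf x = p ^ a) (h : a ≤ k) : p ^ k • x = 0 := by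
  have : addOrderOf x ∣ p ^ k := hx ▸ pow_dvd_pow p h
  exact addOrderOf_dvd_iff_nsmul_eq_zero.mp this

lemma order_add (hp : p.Prime) {A : Type*} [AddCommMonoid A] {x y : A} {a b : ℕ}
    (hx : addOrderOf x = p ^ a) (hy : addOrderOf y = p ^ b) (hab : a < b) :
    addOrderOf (x + y) = p ^ b := by
  have h1 : p ^ b • (x + y) = 0 := by
    rw [smul_add, nsmul_eq_zero_of_le hp hx hab.le, nsmul_eq_zero_of_le hp hy le_rfl, add_zero]
  obtain ⟨c, hc, hcy⟩ := (Nat.dvd_prime_pow hp).mp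
    (addOrderOf_dvd_of_nsmul_eq_zero h1)
  rcases eq_or_lt_of_le hc with rfl | hlt
  · exact hcy
  · exfalso
    have h2 : p ^ (b - 1) • (x + y) = 0 :=
      nsmul_eq_zero_of_le hp hcy (Nat.le_sub_one_of_lt hlt)
    have h3 : p ^ (b - 1) • x = 0 := nsmul_eq_zero_of_le hp hx (by omega)
    have h4 : p ^ (b - 1) • y = 0 := by
      have := h2; rw [smul_add, h3, zero_add] at this; exact this
    have := le_of_nsmul_eq_zero hp hy h4
    omega

end MoreOrder

section Homs
variable {p : ℕ}

lemma gcd_pow_pow (hp : p.Prime) (a b : ℕ) : Nat.gcd (p ^ a) (p ^ b) = p ^ min a b := by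
  rcases le_total a b with h | h
  · rw [Nat.gcd_eq_left (pow_dvd_pow p h), min_eq_left h]
  · rw [Nat.gcd_eq_right (pow_dvd_pow p h), min_eq_right h]

lemma order_castHom (hp : p.Prime) {μ ν b : ℕ} (hμν : μ ≤ ν) (x : ZMod (p ^ ν))
    (hb : b ≤ ν) (hx : addOrderOf x = p ^ b) :
    addOrderOf ((ZMod.castHom (pow_dvd_pow p hμν) (ZMod (p ^ μ))) x)
      = p ^ (μ - min μ (ν - b)) := by
  haveI : NeZero (p ^ ν) := ⟨pow_ne_zero _ hp.pos.ne'⟩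
  have h1 : (ZMod.castHom (pow_dvd_pow p hμν) (ZMod (p ^ μ))) x = ((x.val : ZMod (p ^ μ))) := by
    rw [ZMod.castHom_apply, ZMod.natCast_val]
  rw [h1, ZMod.addOrderOf_coe _ (pow_ne_zero _ hp.pos.ne')]
  have h2 : Nat.gcd (p ^ μ) x.val = p ^ min μ (ν - b) := by
    have h3 : Nat.gcd (p ^ ν) x.val = p ^ (ν - b) := gcd_of_order hp x hb hx
    calc Nat.gcd (p ^ μ) x.val = Nat.gcd (Nat.gcd (p ^ μ) (p ^ ν)) x.val := by
          rw [Nat.gcd_eq_left (pow_dvd_pow p hμν)]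
      _ = Nat.gcd (p ^ μ) (Nat.gcd (p ^ ν) x.val) := Nat.gcd_assoc _ _ _
      _ = p ^ min μ (ν - b) := by rw [h3, gcd_pow_pow hp]
  rw [h2, Nat.pow_div (min_le_left _ _) hp.pos]

def liftHom (p : ℕ) (μ ν : ℕ) : ZMod (p ^ μ) →+ ZMod (p ^ ν) :=
  ZMod.lift (p ^ μ) ⟨zmultiplesHom _ ((p : ZMod (p ^ ν)) ^ (ν - μ)), by
    simp only [zmultiplesHom_apply]
    have hz : ((p : ZMod (p ^ ν))) ^ (ν + (μ - ν)) = 0 := by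
      rw [pow_add, ← Nat.cast_pow, ZMod.natCast_self, zero_mul]
    rw [natCast_zsmul, nsmul_eq_mul, Nat.cast_pow, ← pow_add,
      show μ + (ν - μ) = ν + (μ - ν) by omega, hz]⟩

lemma liftHom_apply (hp : p.Prime) {μ ν : ℕ} (x : ZMod (p ^ μ)) :
    liftHom p μ ν x = ((x.val * p ^ (ν - μ) : ℕ) : ZMod (p ^ ν)) := by
  haveI : NeZero (p ^ μ) := ⟨pow_ne_zero _ hp.pos.ne'⟩
  have key : ∀ m : ℕ, liftHom p μ ν ((m : ℕ) : ZMod (p ^ μ))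
      = ((m * p ^ (ν - μ) : ℕ) : ZMod (p ^ ν)) := by
    intro m
    rw [show ((m : ℕ) : ZMod (p ^ μ)) = ((m : ℤ) : ZMod (p ^ μ)) by push_cast; rfl]
    rw [liftHom, ZMod.lift_coe]
    simp only [zmultiplesHom_apply, zsmul_eq_mul]
    push_cast
    ring
  have hx : ((x.val : ℕ) : ZMod (p ^ μ)) = x := ZMod.natCast_rightInverse x
  conv_lhs => rw [← hx]
  exact key x.val

lemma order_liftHom (hp : p.Prime) {μ ν b : ℕ} (hμν : μ ≤ ν) (x : ZMod (p ^ μ))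
    (hb : b ≤ μ) (hx : addOrderOf x = p ^ b) :
    addOrderOf (liftHom p μ ν x) = p ^ b := by
  haveI : NeZero (p ^ μ) := ⟨pow_ne_zero _ hp.pos.ne'⟩
  rw [liftHom_apply hp, ZMod.addOrderOf_coe _ (pow_ne_zero _ hp.pos.ne')]
  have h2 : Nat.gcd (p ^ ν) (x.val * p ^ (ν - μ)) = p ^ (ν - b) := by
    have h3 : Nat.gcd (p ^ μ) x.val = p ^ (μ - b) := gcd_of_order hp x hb hx
    calc Nat.gcd (p ^ ν) (x.val * p ^ (ν - μ))
        = Nat.gcd (p ^ μ * p ^ (ν - μ)) (x.val * p ^ (ν - μ)) := by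
          rw [← pow_add, Nat.add_sub_cancel' hμν]
      _ = Nat.gcd (p ^ μ) x.val * p ^ (ν - μ) := Nat.gcd_mul_right _ _ _
      _ = p ^ (ν - b) := by rw [h3, ← pow_add]; congr 1; omega
  rw [h2, Nat.pow_div (by omega) hp.pos]
  congr 1; omega

lemma exists_nsmul_eq (hp : p.Prime) {lam b s : ℕ} (x : ZMod (p ^ lam))
    (hb : b ≤ lam) (hx : addOrderOf x = p ^ b) (hs : s + b ≤ lam) :
    ∃ y : ZMod (p ^ lam), x = p ^ s • y := by
  haveI : NeZero (p ^ lam) := ⟨pow_ne_zero _ hp.pos.ne'⟩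
  have h3 : Nat.gcd (p ^ lam) x.val = p ^ (lam - b) := gcd_of_order hp x hb hx
  have hdvd : p ^ s ∣ x.val := by
    refine dvd_trans (pow_dvd_pow p (show s ≤ lam - b by omega)) ?_
    rw [← h3]; exact Nat.gcd_dvd_right _ _
  refine ⟨((x.val / p ^ s : ℕ) : ZMod (p ^ lam)), ?_⟩
  rw [nsmul_eq_mul, ← Nat.cast_mul, Nat.mul_div_cancel' hdvd]
  exact (ZMod.natCast_rightInverse x).symm

end Homs

section Transvection
variable {ι : Type*} [DecidableEq ι] {B : ι → Type*} [∀ k, AddCommGroup (B k)]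

/-- The automorphism of a product adding `f` of the `j`-th coordinate to the `i`-th. -/
def transvection (i j : ι) (hij : i ≠ j) (f : B j →+ B i) : AddAut (∀ k, B k) where
  toFun g := Function.update g i (g i + f (g j))
  invFun g := Function.update g i (g i - f (g j))
  left_inv g := by
    ext k
    by_cases hk : k = i
    · subst hk
      simp [Function.update_self, Function.update_of_ne hij.symm]
    · simp [Function.update_of_ne hk]
  right_inv g := by
    ext k
    by_cases hk : k = i
    · subst hk
      simp [Function.update_self, Function.update_of_ne hij.symm]
    · simp [Function.update_of_ne hk]
  map_add' g h := by
    ext k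
    by_cases hk : k = i
    · subst hk
      simp [Function.update_self, Function.update_of_ne hij.symm]
      abel
    · simp [Function.update_of_ne hk]

lemma transvection_apply_self (i j : ι) (hij : i ≠ j) (f : B j →+ B i) (g : ∀ k, B k) :
    (transvection i j hij f) g i = g i + f (g j) := Function.update_self _ _ _

lemma transvection_apply_ne (i j : ι) (hij : i ≠ j) (f : B j →+ B i) (g : ∀ k, B k)
    {k : ι} (hk : k ≠ i) : (transvection i j hij f) g k = g k := Function.update_of_ne hk _ _

end Transvection

section Exist
variable {p : ℕ}

lemma exists_canonical_aux (hp : p.Prime) {n : ℕ} (lam : Fin n → ℕ) (hmono : Monotone lam) :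
    ∀ (m : ℕ) (g : ∀ i, ZMod (p ^ lam i)) (b : Fin n → ℕ),
      (∀ i, b i ≤ lam i) → (∀ i, addOrderOf (g i) = p ^ b i) →
      (∑ i, (lam i - b i)) ≤ m →
      ∃ a : Fin n → ℕ, (∀ i, a i ≤ lam i) ∧ Canonical lam a ∧
        ∃ φ : AddAut (∀ i, ZMod (p ^ lam i)), ∀ i, addOrderOf ((φ g) i) = p ^ a i := by
  intro m
  induction m with
  | zero =>
    intro g b hble hord hsum
    have hb : ∀ i, b i = lam i := by
      intro i
      have h0 : lam i - b i = 0 := by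
        have := Finset.sum_eq_zero_iff.mp (Nat.le_zero.mp hsum) i (Finset.mem_univ i)
        exact this
      have := hble i
      omega
    refine ⟨b, hble, ?_, AddEquiv.refl _, fun i => hord i⟩
    intro i j hij
    have h1 : lam i ≤ lam j := hmono (by rw [Fin.le_def]; omega)
    rw [hb i, hb j]
    omega
  | succ m ih =>
    intro g b hble hord hsum
    by_cases hc : Canonical lam b
    · exact ⟨b, hble, hc, AddEquiv.refl _, fun i => hord i⟩
    · simp only [Canonical, not_forall] at hc
      obtain ⟨i, j, hij, hviol⟩ := hc
      have hij' : i ≠ j := by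
        intro h; rw [h] at hij; omega
      have hlamij : lam i ≤ lam j := hmono (by rw [Fin.le_def]; omega)
      have hbi := hble i
      have hbj := hble j
      by_cases h1 : b i ≤ b j
      · -- second condition violated : b j + lam i > b i + lam j
        have h2 : b i + lam j < b j + lam i := by
          rcases not_and_or.mp hviol with h | h
          · exact absurd h1 h
          · omega
        -- add the reduction of coordinate j to coordinate i
        set f := (ZMod.castHom (pow_dvd_pow p hlamij) (ZMod (p ^ lam i))).toAddMonoidHom with hf
        set ψ := transvection (B := fun k => ZMod (p ^ lam k)) i j hij' f with hψ
        have hfo : addOrderOf (f (g j)) = p ^ (lam i - (lam j - b j)) := by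
          have := order_castHom hp hlamij (g j) (hble j) (hord j)
          rwa [min_eq_right (by omega : lam j - b j ≤ lam i)] at this
        have hlt : b i < lam i - (lam j - b j) := by omega
        have hnewi : addOrderOf ((ψ g) i) = p ^ (lam i - (lam j - b j)) := by
          rw [hψ, transvection_apply_self]
          exact order_add hp (hord i) hfo hlt
        set b' := Function.update b i (lam i - (lam j - b j)) with hb'
        have hb'le : ∀ k, b' k ≤ lam k := by
          intro k
          by_cases hk : k = i
          · subst hk; rw [hb', Function.update_self]; omega
          · rw [hb', Function.update_of_ne hk]; exact hble k
        have hb'ord : ∀ k, addOrderOf ((ψ g) k) = p ^ b' k := by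
          intro k
          by_cases hk : k = i
          · subst hk; rw [hb', Function.update_self]; exact hnewi
          · rw [hb', Function.update_of_ne hk, transvection_apply_ne _ _ _ _ _ hk]
            exact hord k
        have hsum' : ∑ k, (lam k - b' k) ≤ m := by
          have hlt2 : ∑ k, (lam k - b' k) < ∑ k, (lam k - b k) := by
            apply Finset.sum_lt_sum
            · intro k _
              by_cases hk : k = i
              · subst hk; rw [hb', Function.update_self]; omega
              · rw [hb', Function.update_of_ne hk]
            · exact ⟨i, Finset.mem_univ i, by rw [hb', Function.update_self]; omega⟩
          omega
        obtain ⟨a, halam, hacan, φ, hφ⟩ := ih (ψ g) b' hb'le hb'ord hsum'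
        exact ⟨a, halam, hacan, ψ.trans φ, fun k => by
          have : (ψ.trans φ) g = φ (ψ g) := rfl
          rw [this]; exact hφ k⟩
      · -- b j < b i : add the lift of coordinate i to coordinate j
        push_neg at h1
        set f := liftHom p (lam i) (lam j) with hf
        set ψ := transvection (B := fun k => ZMod (p ^ lam k)) j i hij'.symm f with hψ
        have hfo : addOrderOf (f (g i)) = p ^ b i := order_liftHom hp hlamij (g i) (hble i) (hord i)
        have hnewj : addOrderOf ((ψ g) j) = p ^ b i := by
          rw [hψ, transvection_apply_self]
          exact order_add hp (hord j) hfo h1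
        set b' := Function.update b j (b i) with hb'
        have hb'le : ∀ k, b' k ≤ lam k := by
          intro k
          by_cases hk : k = j
          · subst hk; rw [hb', Function.update_self]; omega
          · rw [hb', Function.update_of_ne hk]; exact hble k
        have hb'ord : ∀ k, addOrderOf ((ψ g) k) = p ^ b' k := by
          intro k
          by_cases hk : k = j
          · subst hk; rw [hb', Function.update_self]; exact hnewj
          · rw [hb', Function.update_of_ne hk, transvection_apply_ne _ _ _ _ _ hk]
            exact hord k
        have hsum' : ∑ k, (lam k - b' k) ≤ m := by
          have hlt2 : ∑ k, (lam k - b' k) < ∑ k, (lam k - b k) := by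
            apply Finset.sum_lt_sum
            · intro k _
              by_cases hk : k = j
              · subst hk; rw [hb', Function.update_self]; omega
              · rw [hb', Function.update_of_ne hk]
            · exact ⟨j, Finset.mem_univ j, by
                rw [hb', Function.update_self]
                have := hble i; omega⟩
          omega
        obtain ⟨a, halam, hacan, φ, hφ⟩ := ih (ψ g) b' hb'le hb'ord hsum'
        exact ⟨a, halam, hacan, ψ.trans φ, fun k => by
          have : (ψ.trans φ) g = φ (ψ g) := rfl
          rw [this]; exact hφ k⟩

end Exist

section Unique
variable {p : ℕ}

/-- The invariant predicate: `g ∈ p^s G + G[p^t]` expressed combinatorially. -/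
def Qp {n : ℕ} (lam a : Fin n → ℕ) (s t : ℕ) : Prop :=
  ∀ i, a i ≤ t ∨ s + a i ≤ lam i

lemma pi_kill {n : ℕ} {lam : Fin n → ℕ} {i : Fin n} (x : ZMod (p ^ lam i)) {k : ℕ}
    (hk : lam i ≤ k) : p ^ k • x = 0 := by
  rw [nsmul_eq_mul]
  have : ((p ^ k : ℕ) : ZMod (p ^ lam i)) = 0 := by
    rw [show k = lam i + (k - lam i) by omega, pow_add, Nat.cast_mul, ZMod.natCast_self, zero_mul]
  rw [this, zero_mul]

lemma Qp_iff_decomp (hp : p.Prime) {n : ℕ} {lam : Fin n → ℕ} (a : Fin n → ℕ)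
    (hle : ∀ i, a i ≤ lam i) (x : ∀ i, ZMod (p ^ lam i))
    (hord : ∀ i, addOrderOf (x i) = p ^ a i) (s t : ℕ) :
    Qp lam a s t ↔ ∃ y z : ∀ i, ZMod (p ^ lam i), x = p ^ s • y + z ∧ p ^ t • z = 0 := by
  constructor
  · intro hQ
    classical
    refine ⟨fun i => if h : s + a i ≤ lam i then
        Classical.choose (exists_nsmul_eq hp (x i) (hle i) (hord i) h) else 0,
      fun i => if s + a i ≤ lam i then 0 else x i, ?_, ?_⟩
    · funext i
      simp only [Pi.add_apply, Pi.smul_apply]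
      by_cases h : s + a i ≤ lam i
      · rw [dif_pos h, if_pos h, add_zero]
        exact Classical.choose_spec (exists_nsmul_eq hp (x i) (hle i) (hord i) h)
      · rw [dif_neg h, if_neg h, smul_zero, zero_add]
    · funext i
      simp only [Pi.smul_apply, Pi.zero_apply]
      by_cases h : s + a i ≤ lam i
      · rw [if_pos h, smul_zero]
      · rw [if_neg h]
        have hat : a i ≤ t := (hQ i).resolve_right h
        exact nsmul_eq_zero_of_le hp (hord i) hat
  · rintro ⟨y, z, hxyz, hz⟩ i
    have hxi : x i = p ^ s • y i + z i := by rw [hxyz]; rfl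
    have hzi : p ^ t • z i = 0 := by
      have : (p ^ t • z) i = (0 : ∀ i, ZMod (p ^ lam i)) i := by rw [hz]
      simpa using this
    by_cases hst : s + t ≤ lam i
    · right
      have h1 : p ^ (lam i - s) • x i = 0 := by
        rw [hxi, smul_add, smul_smul, ← pow_add]
        have e1 : p ^ (lam i - s + s) • y i = 0 := pi_kill _ (by omega)
        have e2 : p ^ (lam i - s) • z i = 0 := by
          rw [show lam i - s = (lam i - s - t) + t by omega, pow_add, mul_smul, hzi, smul_zero]
        rw [e1, e2, add_zero]
      have := le_of_nsmul_eq_zero hp (hord i) h1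
      omega
    · left
      have h1 : p ^ t • x i = 0 := by
        rw [hxi, smul_add, smul_smul, ← pow_add, hzi, add_zero]
        exact pi_kill _ (by omega)
      exact le_of_nsmul_eq_zero hp (hord i) h1

lemma orbit_Qp (hp : p.Prime) {n : ℕ} {lam : Fin n → ℕ} (a : Fin n → ℕ)
    (hle : ∀ i, a i ≤ lam i) (g : ∀ i, ZMod (p ^ lam i))
    (φ : AddAut (∀ i, ZMod (p ^ lam i)))
    (hord : ∀ i, addOrderOf ((φ g) i) = p ^ a i) (s t : ℕ) :
    Qp lam a s t ↔ ∃ y z : ∀ i, ZMod (p ^ lam i), g = p ^ s • y + z ∧ p ^ t • z = 0 := by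
  rw [Qp_iff_decomp hp a hle (φ g) hord s t]
  constructor
  · rintro ⟨y, z, h1, h2⟩
    refine ⟨φ.symm y, φ.symm z, ?_, ?_⟩
    · have := congrArg φ.symm h1
      rwa [AddEquiv.symm_apply_apply, map_add, map_nsmul] at this
    · rw [← map_nsmul, h2, map_zero]
  · rintro ⟨y, z, h1, h2⟩
    refine ⟨φ y, φ z, ?_, ?_⟩
    · have := congrArg φ h1
      rwa [map_add, map_nsmul] at this
    · rw [← map_nsmul, h2, map_zero]

lemma canonical_mono {n : ℕ} {lam a : Fin n → ℕ} (h : Canonical lam a) :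
    ∀ (d : ℕ) (i k : Fin n), (k : ℕ) = (i : ℕ) + d →
      a i ≤ a k ∧ a k + lam i ≤ a i + lam k := by
  intro d
  induction d with
  | zero =>
    intro i k hk
    have : i = k := Fin.ext (by omega)
    subst this
    omega
  | succ d ih =>
    intro i k hk
    have hk' : (i : ℕ) + d < n := by have := k.isLt; omega
    set k' : Fin n := ⟨(i : ℕ) + d, hk'⟩ with hk'def
    have hk'v : (k' : ℕ) = (i : ℕ) + d := rfl
    have h1 := ih i k' rfl
    have h2 := h k' k (by omega)
    omega

lemma canonical_unique_aux {n : ℕ} (lam a a' : Fin n → ℕ)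
    (ha : ∀ i, a i ≤ lam i) (ha' : ∀ i, a' i ≤ lam i)
    (hca : Canonical lam a) (i : Fin n)
    (hmax : ∀ k, i < k → a k = a' k) (hlt : a i < a' i)
    (hQ : ∀ s t, Qp lam a s t → Qp lam a' s t) : False := by
  classical
  set t := a' i - 1 with ht
  set S := Finset.univ.filter (fun k => t < a' k) with hS
  have hiS : i ∈ S := by
    rw [hS, Finset.mem_filter]
    exact ⟨Finset.mem_univ _, by omega⟩
  have hSne : S.Nonempty := ⟨i, hiS⟩
  set V := S.image (fun k => lam k - a' k) with hV
  have hVne : V.Nonempty := hSne.image _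
  set m := V.min' hVne with hm
  obtain ⟨k₀, hk₀S, hk₀⟩ := Finset.mem_image.mp (V.min'_mem hVne)
  have hmle : m ≤ lam i - a' i :=
    Finset.min'_le V _ (Finset.mem_image_of_mem _ hiS)
  set s := m + 1 with hs
  have hQa : Qp lam a s t := by
    intro k
    rcases le_or_gt (k : ℕ) (i : ℕ) with hki | hik
    · left
      have := canonical_mono hca ((i : ℕ) - (k : ℕ)) k i (by omega)
      omega
    · right
      have hmono := canonical_mono hca ((k : ℕ) - (i : ℕ)) i k (by omega)
      have heq : a k = a' k := hmax k (by rwa [Fin.lt_def])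
      have h1 := ha i
      have h2 := ha' i
      omega
  have hQa' := hQ s t hQa k₀
  have hk₀t : t < a' k₀ := (Finset.mem_filter.mp hk₀S).2
  have hk₀le := ha' k₀
  omega

lemma canonical_unique {n : ℕ} (lam a a' : Fin n → ℕ)
    (ha : ∀ i, a i ≤ lam i) (ha' : ∀ i, a' i ≤ lam i)
    (hca : Canonical lam a) (hca' : Canonical lam a')
    (hQ : ∀ s t, Qp lam a s t ↔ Qp lam a' s t) : a = a' := by
  classical
  by_contra hne
  set D := Finset.univ.filter (fun k => a k ≠ a' k) with hD
  have hDne : D.Nonempty := by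
    obtain ⟨k, hk⟩ := Function.ne_iff.mp hne
    exact ⟨k, by rw [hD, Finset.mem_filter]; exact ⟨Finset.mem_univ _, hk⟩⟩
  set i := D.max' hDne with hi
  have hiD : i ∈ D := D.max'_mem hDne
  have hine : a i ≠ a' i := (Finset.mem_filter.mp hiD).2
  have hmax : ∀ k, i < k → a k = a' k := by
    intro k hk
    by_contra hkne
    have : k ∈ D := by rw [hD, Finset.mem_filter]; exact ⟨Finset.mem_univ _, hkne⟩
    have := D.le_max' k this
    rw [← hi] at this
    exact absurd hk (not_lt.mpr this)
  rcases lt_or_gt_of_ne hine with h | h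
  · exact canonical_unique_aux lam a a' ha ha' hca i hmax h (fun s t => (hQ s t).mp)
  · exact canonical_unique_aux lam a' a ha' ha hca' i (fun k hk => (hmax k hk).symm) h
      (fun s t => (hQ s t).mpr)

end Unique

/-- Every automorphism class of `G = Z_{p^{λ_1}} × ⋯ × Z_{p^{λ_n}}` contains a unique
canonical type: for every `g ∈ G` there is exactly one canonical tuple `a` (with
`0 ≤ a_i ≤ λ_i`) such that the `Aut(G)`-orbit of `g` meets `T(a)`. -/
theorem unique_canonical_type (p : ℕ) (hp : p.Prime) [NeZero p]
    (n : ℕ) (hn : 1 ≤ n) (lam : Fin n → ℕ) (hlam : ∀ i, 1 ≤ lam i) (hmono : Monotone lam)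
    (g : ∀ i : Fin n, ZMod (p ^ lam i)) :
    ∃! a : Fin n → ℕ, (∀ i, a i ≤ lam i) ∧ Canonical lam a ∧
      ∃ φ : AddAut (∀ i : Fin n, ZMod (p ^ lam i)), φ g ∈ TypeSet p lam a := by
  classical
  have hble : ∀ i, ∃ b ≤ lam i, addOrderOf (g i) = p ^ b := fun i => exists_order hp (g i)
  choose b hb hord using hble
  obtain ⟨a, hale, hacan, φ, hφ⟩ :=
    exists_canonical_aux hp lam hmono (∑ i, (lam i - b i)) g b hb hord le_rfl
  refine ⟨a, ⟨hale, hacan, φ, hφ⟩, ?_⟩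
  rintro a' ⟨ha'le, ha'can, φ', hφ'⟩
  have hφ'' : ∀ i, addOrderOf ((φ' g) i) = p ^ a' i := hφ'
  exact canonical_unique lam a' a ha'le hale ha'can hacan (fun s t =>
    (orbit_Qp hp a' ha'le g φ' hφ'' s t).trans (orbit_Qp hp a hale g φ hφ s t).symm)
end

section
/- Let a = (a_1,…,a_n) be an integer tuple with 0 ≤ a_i ≤ λ_i for all i. Then the regular subgroup R(a) of G = Z_{p^{λ_1}} × ⋯ × Z_{p^{λ_n}} is a characteristic subgroup of G if and only if a is canonical. -/
/-- The regular subgroup `R(a) = {g ∈ G : p^{a_i} ⬝ g_i = 0 for all i}` of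
`G = Z_{p^{λ_1}} × ⋯ × Z_{p^{λ_n}}`. -/
def R (p : ℕ) {n : ℕ} (lam : Fin n → ℕ) (a : Fin n → ℕ) :
    AddSubgroup (∀ i : Fin n, ZMod (p ^ lam i)) where
  carrier := {g | ∀ i, ((p ^ a i : ℕ) : ZMod (p ^ lam i)) * g i = 0}
  zero_mem' := fun i => by rw [Pi.zero_apply, mul_zero]
  add_mem' := fun {g} {h} hg hh i => by
    rw [Pi.add_apply, mul_add, hg i, hh i, add_zero]
  neg_mem' := fun {g} hg i => by rw [Pi.neg_apply, mul_neg, hg i, neg_zero]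

lemma mem_R_iff {p n : ℕ} {lam a : Fin n → ℕ} {g : ∀ i : Fin n, ZMod (p ^ lam i)} :
    g ∈ R p lam a ↔ ∀ i, ((p ^ a i : ℕ) : ZMod (p ^ lam i)) * g i = 0 := Iff.rfl

/-- Pairwise consequences of the canonical condition. -/
lemma canonical_pairwise {n : ℕ} {lam a : Fin n → ℕ} (hc : Canonical lam a)
    (i j : Fin n) (hij : i ≤ j) : a i ≤ a j ∧ a j + lam i ≤ a i + lam j := by
  obtain ⟨k, hk⟩ : ∃ k, (j : ℕ) = (i : ℕ) + k := ⟨(j : ℕ) - (i : ℕ), by omega⟩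
  clear hij
  induction k generalizing j with
  | zero =>
      have : i = j := Fin.ext (by omega)
      subst this; omega
  | succ k ih =>
      have hjn : (j : ℕ) < n := j.isLt
      have hm : (i : ℕ) + k < n := by omega
      have h1 := ih ⟨(i : ℕ) + k, hm⟩ rfl
      have h2 := hc ⟨(i : ℕ) + k, hm⟩ j (by show (j : ℕ) = (i : ℕ) + k + 1; omega)
      omega

lemma canonical_min {n : ℕ} {lam a : Fin n → ℕ} (hmono : Monotone lam)
    (hc : Canonical lam a) (s t : Fin n) :
    min (lam s) (lam t) + a s ≤ a t + lam s := by
  rcases le_total s t with h | h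
  · have h1 := canonical_pairwise hc s t h
    have h2 := hmono h
    omega
  · have h1 := canonical_pairwise hc t s h
    omega

/-- The key torsion-transfer lemma for homs between cyclic `p`-groups. -/
lemma key_hom {p : ℕ} [NeZero p] {ls lt as bt : ℕ}
    (has : as ≤ ls) (hcan : min ls lt + as ≤ bt + ls)
    (h : ZMod (p ^ ls) →+ ZMod (p ^ lt))
    (x : ZMod (p ^ ls)) (hx : ((p ^ as : ℕ) : ZMod (p ^ ls)) * x = 0) :
    ((p ^ bt : ℕ) : ZMod (p ^ lt)) * h x = 0 := by
  haveI : NeZero (p ^ ls) := ⟨pow_ne_zero _ (NeZero.ne p)⟩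
  obtain ⟨u, hu⟩ : p ^ (ls - as) ∣ x.val := by
    have h1 : ((p ^ as * x.val : ℕ) : ZMod (p ^ ls)) = 0 := by
      rw [Nat.cast_mul, ZMod.natCast_rightInverse x, hx]
    have h2 : p ^ ls ∣ p ^ as * x.val :=
      (ZMod.natCast_eq_zero_iff _ _).mp h1
    have h3 : p ^ as * p ^ (ls - as) ∣ p ^ as * x.val := by
      rwa [← pow_add, Nat.add_sub_cancel' has]
    exact (mul_dvd_mul_iff_left (pow_ne_zero as (NeZero.ne p))).mp h3
  have hxeq : x = (p ^ (ls - as)) • ((u : ℕ) : ZMod (p ^ ls)) := by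
    rw [nsmul_eq_mul, ← Nat.cast_mul, ← hu]
    exact (ZMod.natCast_rightInverse x).symm
  set y := h ((u : ℕ) : ZMod (p ^ ls)) with hy
  have hstep : ((p ^ bt : ℕ) : ZMod (p ^ lt)) * h x
      = ((p ^ (bt + (ls - as)) : ℕ) : ZMod (p ^ lt)) * y := by
    rw [hxeq, map_nsmul, nsmul_eq_mul, ← mul_assoc, ← Nat.cast_mul, ← pow_add]
  rw [hstep]
  rcases le_total lt ls with hl | hl
  · have he : lt ≤ bt + (ls - as) := by omega
    have hsplit : (p ^ (bt + (ls - as)) : ℕ) = p ^ lt * p ^ (bt + (ls - as) - lt) := by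
      rw [← pow_add]; congr 1; omega
    rw [hsplit, Nat.cast_mul, ZMod.natCast_self, zero_mul, zero_mul]
  · have he : ls ≤ bt + (ls - as) := by omega
    have hsplit : (p ^ (bt + (ls - as)) : ℕ) = p ^ (bt + (ls - as) - ls) * p ^ ls := by
      rw [← pow_add]; congr 1; omega
    have hzero : ((p ^ ls : ℕ) : ZMod (p ^ lt)) * y = 0 := by
      have : ((p ^ ls : ℕ) : ZMod (p ^ lt)) * y
          = h (((p ^ ls : ℕ) : ZMod (p ^ ls)) * ((u : ℕ) : ZMod (p ^ ls))) := by
        rw [← nsmul_eq_mul, ← nsmul_eq_mul, map_nsmul]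
      rw [this, ZMod.natCast_self, zero_mul, map_zero]
    rw [hsplit, Nat.cast_mul, mul_assoc, hzero, mul_zero]

/-- Canonical tuples give fully invariant subgroups. -/
lemma hom_preserves {p n : ℕ} [NeZero p] {lam a : Fin n → ℕ}
    (hmono : Monotone lam) (ha : ∀ i, a i ≤ lam i) (hc : Canonical lam a)
    (φ : (∀ i : Fin n, ZMod (p ^ lam i)) →+ (∀ i : Fin n, ZMod (p ^ lam i)))
    {g : ∀ i : Fin n, ZMod (p ^ lam i)} (hg : g ∈ R p lam a) :
    φ g ∈ R p lam a := by
  intro t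
  have hgsum : g = ∑ s : Fin n, Pi.single s (g s) := (Finset.univ_sum_single g).symm
  rw [hgsum, map_sum, Finset.sum_apply, Finset.mul_sum]
  apply Finset.sum_eq_zero
  intro s _
  have key := key_hom (p := p) (ha s) (canonical_min hmono hc s t)
    ((Pi.evalAddMonoidHom _ t).comp (φ.comp (AddMonoidHom.single _ s))) (g s) (hg s)
  simpa using key

/-- A shear automorphism `g ↦ g + E g` for a square-zero endomorphism `E`. -/
def shear {G : Type*} [AddCommGroup G] (E : G →+ G) (hE : ∀ g, E (E g) = 0) :
    AddAut G where
  toFun g := g + E g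
  invFun g := g - E g
  left_inv g := by
    show (g + E g) - E (g + E g) = g
    rw [map_add, hE]; abel
  right_inv g := by
    show (g - E g) + E (g - E g) = g
    rw [map_sub, hE]; abel
  map_add' x y := by
    show (x + y) + E (x + y) = (x + E x) + (y + E y)
    rw [map_add]; abel

lemma extract {p n : ℕ} {lam a : Fin n → ℕ}
    (H : ∀ φ : AddAut (∀ i : Fin n, ZMod (p ^ lam i)),
        (R p lam a).map φ.toAddMonoidHom = R p lam a)
    (s t : Fin n) (hst : s ≠ t) (f : ZMod (p ^ lam s) →+ ZMod (p ^ lam t))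
    (x : ZMod (p ^ lam s)) (hx : ((p ^ a s : ℕ) : ZMod (p ^ lam s)) * x = 0) :
    ((p ^ a t : ℕ) : ZMod (p ^ lam t)) * f x = 0 := by
  set E : (∀ i : Fin n, ZMod (p ^ lam i)) →+ (∀ i : Fin n, ZMod (p ^ lam i)) :=
    (AddMonoidHom.single _ t).comp (f.comp (Pi.evalAddMonoidHom _ s)) with hEdef
  have hEapp : ∀ g, E g = Pi.single t (f (g s)) := fun g => rfl
  have hE : ∀ g, E (E g) = 0 := by
    intro g
    rw [hEapp, hEapp, Pi.single_eq_of_ne hst, map_zero, Pi.single_zero]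
  set φ := shear E hE with hφ
  have hgR : Pi.single s x ∈ R p lam a := by
    intro k
    rcases eq_or_ne k s with rfl | hk
    · rw [Pi.single_eq_same]; exact hx
    · rw [Pi.single_eq_of_ne hk, mul_zero]
  have hmem : φ (Pi.single s x) ∈ R p lam a := by
    rw [← H φ]
    exact AddSubgroup.mem_map.mpr ⟨_, hgR, rfl⟩
  have ht := hmem t
  have hval : (φ (Pi.single s x)) t = f x := by
    show ((Pi.single s x : ∀ i : Fin n, ZMod (p ^ lam i)) + E (Pi.single s x)) t = f x
    rw [Pi.add_apply, hEapp, Pi.single_eq_same, Pi.single_eq_same,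
      Pi.single_eq_of_ne (Ne.symm hst), zero_add]
  rwa [hval] at ht

lemma mul_cast_pow {p M x y : ℕ} :
    ((p ^ x : ℕ) : ZMod M) * ((p ^ y : ℕ) : ZMod M) = ((p ^ (x + y) : ℕ) : ZMod M) := by
  rw [← Nat.cast_mul, ← pow_add]

lemma cast_pow_eq_zero {p : ℕ} (N k : ℕ) (h : N ≤ k) :
    ((p ^ k : ℕ) : ZMod (p ^ N)) = 0 := by
  have : (p ^ k : ℕ) = p ^ N * p ^ (k - N) := by rw [← pow_add]; congr 1; omega
  rw [this, Nat.cast_mul, ZMod.natCast_self, zero_mul]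

lemma cast_pow_ne_zero {p : ℕ} (hp : p.Prime) (N k : ℕ) (h : k < N) :
    ((p ^ k : ℕ) : ZMod (p ^ N)) ≠ 0 := by
  haveI : NeZero (p ^ N) := ⟨pow_ne_zero _ hp.ne_zero⟩
  rw [Ne, ZMod.natCast_eq_zero_iff]
  intro hdvd
  have := (Nat.pow_dvd_pow_iff_le_right hp.one_lt).mp hdvd
  omega

/-- `R(a)` is a characteristic subgroup of `G = Z_{p^{λ_1}} × ⋯ × Z_{p^{λ_n}}` if and only
if the tuple `a` is canonical. -/
theorem regular_characteristic_iff_canonical (p : ℕ) (hp : p.Prime) [NeZero p]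
    (n : ℕ) (hn : 1 ≤ n) (lam : Fin n → ℕ) (hlam : ∀ i, 1 ≤ lam i) (hmono : Monotone lam)
    (a : Fin n → ℕ) (ha : ∀ i, a i ≤ lam i) :
    (∀ φ : AddAut (∀ i : Fin n, ZMod (p ^ lam i)),
        (R p lam a).map φ.toAddMonoidHom = R p lam a) ↔ Canonical lam a := by
  constructor
  · -- characteristic → canonical
    intro H i j hij
    have hijle : i ≤ j := by
      rw [Fin.le_def]; omega
    have hll : lam i ≤ lam j := hmono hijle
    have hne : i ≠ j := by
      intro h; rw [h] at hij; omega
    have hai := ha i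
    have haj := ha j
    constructor
    · -- a i ≤ a j
      by_contra hlt
      push_neg at hlt  -- a j < a i
      -- hom from component i to component j : 1 ↦ p^(lam j - lam i)
      set c : ZMod (p ^ lam j) := ((p ^ (lam j - lam i) : ℕ) : ZMod (p ^ lam j)) with hcdef
      have hc0 : (zmultiplesHom (ZMod (p ^ lam j)) c) ((p ^ lam i : ℕ) : ℤ) = 0 := by
        rw [zmultiplesHom_apply, natCast_zsmul, nsmul_eq_mul, hcdef, Nat.cast_pow,
          ← Nat.cast_pow, mul_cast_pow]
        exact cast_pow_eq_zero _ _ (by omega)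
      set f : ZMod (p ^ lam i) →+ ZMod (p ^ lam j) :=
        ZMod.lift (p ^ lam i) ⟨zmultiplesHom _ c, hc0⟩ with hfdef
      set x : ZMod (p ^ lam i) := ((p ^ (lam i - a i) : ℕ) : ZMod (p ^ lam i)) with hxdef
      have hx : ((p ^ a i : ℕ) : ZMod (p ^ lam i)) * x = 0 := by
        rw [hxdef, mul_cast_pow]
        exact cast_pow_eq_zero _ _ (by omega)
      have hfx : f x = ((p ^ (lam j - a i) : ℕ) : ZMod (p ^ lam j)) := by
        have hxz : x = (((p ^ (lam i - a i) : ℕ) : ℤ) : ZMod (p ^ lam i)) := by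
          rw [hxdef]; push_cast; ring
        rw [hxz, hfdef, ZMod.lift_coe, zmultiplesHom_apply, natCast_zsmul,
          nsmul_eq_mul, hcdef, Nat.cast_pow, ← Nat.cast_pow, mul_cast_pow]
        have : lam i - a i + (lam j - lam i) = lam j - a i := by omega
        rw [this]
      have hcontr := extract H i j hne f x hx
      rw [hfx, mul_cast_pow] at hcontr
      exact cast_pow_ne_zero hp _ _ (by omega) hcontr
    · -- a j + lam i ≤ a i + lam j
      by_contra hlt
      push_neg at hlt  -- a i + lam j < a j + lam i
      -- hom from component j to component i : 1 ↦ 1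
      have hc0 : (zmultiplesHom (ZMod (p ^ lam i)) (1 : ZMod (p ^ lam i)))
          ((p ^ lam j : ℕ) : ℤ) = 0 := by
        rw [zmultiplesHom_apply, natCast_zsmul, nsmul_eq_mul, mul_one]
        exact cast_pow_eq_zero _ _ (by omega)
      set f : ZMod (p ^ lam j) →+ ZMod (p ^ lam i) :=
        ZMod.lift (p ^ lam j) ⟨zmultiplesHom _ 1, hc0⟩ with hfdef
      set x : ZMod (p ^ lam j) := ((p ^ (lam j - a j) : ℕ) : ZMod (p ^ lam j)) with hxdef
      have hx : ((p ^ a j : ℕ) : ZMod (p ^ lam j)) * x = 0 := by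
        rw [hxdef, mul_cast_pow]
        exact cast_pow_eq_zero _ _ (by omega)
      have hfx : f x = ((p ^ (lam j - a j) : ℕ) : ZMod (p ^ lam i)) := by
        have hxz : x = (((p ^ (lam j - a j) : ℕ) : ℤ) : ZMod (p ^ lam j)) := by
          rw [hxdef]; push_cast; ring
        rw [hxz, hfdef, ZMod.lift_coe, zmultiplesHom_apply, natCast_zsmul,
          nsmul_eq_mul, mul_one]
      have hcontr := extract H j i (Ne.symm hne) f x hx
      rw [hfx, mul_cast_pow] at hcontr
      exact cast_pow_ne_zero hp _ _ (by omega) hcontr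
  · -- canonical → characteristic
    intro hc φ
    apply le_antisymm
    · rintro x hx
      obtain ⟨g, hg, rfl⟩ := AddSubgroup.mem_map.mp hx
      exact hom_preserves hmono ha hc φ.toAddMonoidHom hg
    · intro g hg
      exact AddSubgroup.mem_map.mpr
        ⟨φ.symm g, hom_preserves hmono ha hc φ.symm.toAddMonoidHom hg,
          φ.apply_symm_apply g⟩
end

section
/- Suppose p is an odd prime. Then every characteristic subgroup H of G = Z_{p^{λ_1}} × ⋯ × Z_{p^{λ_n}} is regular: there exists an integer tuple a = (a_1,…,a_n) with 0 ≤ a_i ≤ λ_i for all i such that H = R(a). -/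

theorem auxA (p l : ℕ) (hp : p.Prime) (P : AddSubgroup (ZMod (p ^ l))) :
    ∃ a ≤ l, ∀ x, x ∈ P ↔ ((p ^ a : ℕ) : ZMod (p ^ l)) * x = 0 := by
  haveI : NeZero (p ^ l) := ⟨pow_ne_zero _ hp.ne_zero⟩
  obtain ⟨k, hk⟩ := Int.subgroup_cyclic (P.comap (Int.castAddHom (ZMod (p ^ l))))
  have hmem : ∀ x : ℤ, ((x : ZMod (p ^ l)) ∈ P) ↔ ∃ m : ℤ, m • k = x := by
    intro x
    constructor
    · intro hx
      have : x ∈ P.comap (Int.castAddHom (ZMod (p ^ l))) := hx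
      rw [hk, AddSubgroup.mem_closure_singleton] at this
      exact this
    · intro hx
      have : x ∈ P.comap (Int.castAddHom (ZMod (p ^ l))) := by
        rw [hk, AddSubgroup.mem_closure_singleton]; exact hx
      exact this
  have hNmem : ∃ m : ℤ, m • k = ((p ^ l : ℕ) : ℤ) := by
    rw [← hmem]
    have h0 : (((p ^ l : ℕ) : ℤ) : ZMod (p ^ l)) = 0 := by
      push_cast
      exact_mod_cast ZMod.natCast_self (p ^ l)
    rw [h0]
    exact P.zero_mem
  obtain ⟨m, hm⟩ := hNmem
  have hkdvd : k ∣ ((p ^ l : ℕ) : ℤ) := Dvd.intro_left m (by simpa [smul_eq_mul] using hm)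
  have hkdvdN : k.natAbs ∣ p ^ l := by
    have h2 := Int.natAbs_dvd_natAbs.mpr hkdvd
    rwa [Int.natAbs_natCast] at h2
  obtain ⟨c, hc, hck⟩ := (Nat.dvd_prime_pow hp).mp hkdvdN
  refine ⟨l - c, Nat.sub_le _ _, fun x => ?_⟩
  have hxcast : x = ((x.val : ℕ) : ZMod (p ^ l)) := by
    rw [ZMod.natCast_val, ZMod.cast_id]
  have hpcP : ((p ^ c : ℕ) : ZMod (p ^ l)) ∈ P := by
    have h1 : ((k : ZMod (p ^ l))) ∈ P := (hmem k).mpr ⟨1, one_smul _ _⟩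
    rcases Int.natAbs_eq k with h | h
    · rw [h, hck] at h1; push_cast at h1 ⊢; exact h1
    · rw [h, hck] at h1
      have := P.neg_mem h1
      push_cast at this ⊢
      simpa using this
  constructor
  · intro hx
    -- x.val cast as int is in comap, so k ∣ x.val, so p^c ∣ x.val in ℕ
    have hxv : ((x.val : ℤ) : ZMod (p ^ l)) ∈ P := by
      push_cast
      rwa [← hxcast]
    obtain ⟨m', hm'⟩ := (hmem _).mp hxv
    have hkdx : k ∣ (x.val : ℤ) := Dvd.intro_left m' (by simpa [smul_eq_mul] using hm')
    have hpcdx : p ^ c ∣ x.val := by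
      have h2 := Int.natAbs_dvd_natAbs.mpr hkdx
      rwa [Int.natAbs_natCast, hck] at h2
    obtain ⟨m'', hm''⟩ := hpcdx
    have hNdvd : p ^ l ∣ p ^ (l - c) * x.val := by
      rw [hm'', ← mul_assoc, mul_comm (p ^ (l - c)) (p ^ c), ← pow_add,
        Nat.add_sub_cancel' hc]
      exact Dvd.intro _ rfl
    have : ((p ^ (l - c) * x.val : ℕ) : ZMod (p ^ l)) = 0 :=
      (ZMod.natCast_eq_zero_iff _ _).mpr hNdvd
    push_cast at this
    rw [← hxcast] at this
    exact_mod_cast this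
  · intro hx
    have hv : p ^ l ∣ p ^ (l - c) * x.val := by
      have : ((p ^ (l - c) * x.val : ℕ) : ZMod (p ^ l)) = 0 := by
        push_cast
        rw [← hxcast]
        exact_mod_cast hx
      exact (ZMod.natCast_eq_zero_iff _ _).mp this
    have hdvd : p ^ c ∣ x.val := by
      have hNc : p ^ l = p ^ (l - c) * p ^ c := by
        rw [← pow_add, Nat.sub_add_cancel hc]
      obtain ⟨t, ht⟩ := hv
      have ht2 : p ^ (l - c) * x.val = p ^ (l - c) * (p ^ c * t) := by
        rw [← mul_assoc, ← pow_add, Nat.sub_add_cancel hc]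
        exact ht
      exact ⟨t, Nat.eq_of_mul_eq_mul_left (pow_pos hp.pos _) ht2⟩
    obtain ⟨m', hm'⟩ := hdvd
    have hxeq : x = m' • ((p ^ c : ℕ) : ZMod (p ^ l)) := by
      rw [nsmul_eq_mul, hxcast, hm']
      push_cast; ring
    rw [hxeq]
    exact AddSubgroup.nsmul_mem P hpcP m'

theorem auxB (p : ℕ) (hp : p.Prime) (hp2 : p ≠ 2) (n : ℕ) (lam : Fin n → ℕ)
    (H : AddSubgroup (∀ i : Fin n, ZMod (p ^ lam i)))
    (hchar : ∀ φ : AddAut (∀ i : Fin n, ZMod (p ^ lam i)), H.map φ.toAddMonoidHom = H)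
    (g : ∀ i, ZMod (p ^ lam i)) (hg : g ∈ H) (i : Fin n) :
    Pi.single i (g i) ∈ H := by
  haveI : ∀ j : Fin n, NeZero (p ^ lam j) := fun j => ⟨pow_ne_zero _ hp.ne_zero⟩
  set σ : AddAut (∀ j : Fin n, ZMod (p ^ lam j)) :=
    AddEquiv.piCongrRight (fun j => if j = i then AddEquiv.refl _ else AddEquiv.neg _) with hσ
  have hσg : σ g ∈ H := by
    rw [← hchar σ]
    exact ⟨g, hg, rfl⟩
  have hsum : g + σ g = Pi.single i (g i + g i) := by
    funext j
    by_cases hj : j = i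
    · subst hj
      simp [hσ, AddEquiv.piCongrRight_apply]
    · simp [hσ, AddEquiv.piCongrRight_apply, hj, Pi.single_eq_of_ne hj]
  have hh : Pi.single i (g i + g i) ∈ H := by
    rw [← hsum]; exact H.add_mem hg hσg
  -- multiply by the inverse of 2
  have hunit : IsUnit (2 : ZMod (p ^ lam i)) := by
    have hcop : Nat.Coprime 2 (p ^ lam i) :=
      ((Nat.coprime_primes Nat.prime_two hp).mpr (fun h => hp2 h.symm)).pow_right _
    have := (ZMod.isUnit_iff_coprime 2 (p ^ lam i)).mpr hcop
    simpa using this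
  set m : ℕ := ((2 : ZMod (p ^ lam i))⁻¹).val with hm
  have hmcast : ((m : ℕ) : ZMod (p ^ lam i)) = (2 : ZMod (p ^ lam i))⁻¹ := by
    rw [hm, ZMod.natCast_val, ZMod.cast_id]
  have key : m • Pi.single i (g i + g i) = (Pi.single i (g i) : ∀ j, ZMod (p ^ lam j)) := by
    rw [← Pi.single_smul]
    congr 1
    rw [nsmul_eq_mul, hmcast, ← two_mul, ← mul_assoc,
      ZMod.inv_mul_of_unit _ hunit, one_mul]
  rw [← key]
  exact AddSubgroup.nsmul_mem H hh m

theorem characteristic_subgroup_regular' (p : ℕ) (hp : p.Prime) (hp2 : p ≠ 2) [NeZero p]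
    (n : ℕ) (hn : 1 ≤ n) (lam : Fin n → ℕ) (hlam : ∀ i, 1 ≤ lam i) (hmono : Monotone lam)
    (H : AddSubgroup (∀ i : Fin n, ZMod (p ^ lam i)))
    (hchar : ∀ φ : AddAut (∀ i : Fin n, ZMod (p ^ lam i)), H.map φ.toAddMonoidHom = H) :
    ∃ a : Fin n → ℕ, (∀ i, a i ≤ lam i) ∧
      ∀ g, g ∈ H ↔ ∀ i, ((p ^ a i : ℕ) : ZMod (p ^ lam i)) * g i = 0 := by
  set P : ∀ i : Fin n, AddSubgroup (ZMod (p ^ lam i)) := fun i =>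
    { carrier := {x | Pi.single i x ∈ H}
      zero_mem' := by simp [H.zero_mem]
      add_mem' := fun {a b} ha hb => by
        have := H.add_mem ha hb
        simpa [← Pi.single_add] using this
      neg_mem' := fun {a} ha => by
        have := H.neg_mem ha
        simpa [← Pi.single_neg] using this } with hP
  have hHP : ∀ g, g ∈ H ↔ ∀ i, g i ∈ P i := by
    intro g
    constructor
    · intro hg i
      exact auxB p hp hp2 n lam H hchar g hg i
    · intro hg
      have : g = ∑ j, Pi.single j (g j) := (Finset.univ_sum_single g).symm
      rw [this]
      exact AddSubgroup.sum_mem H fun j _ => hg j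
  choose a ha hmema using fun i => auxA p (lam i) hp (P i)
  exact ⟨a, ha, fun g => (hHP g).trans (forall_congr' fun i => hmema i (g i))⟩

/-- Miller–Baer: for an odd prime `p`, every characteristic subgroup of
`G = Z_{p^{λ_1}} × ⋯ × Z_{p^{λ_n}}` is regular, i.e. of the form `R(a)` for some tuple
`a` with `0 ≤ a_i ≤ λ_i`. -/
theorem characteristic_subgroup_regular (p : ℕ) (hp : p.Prime) (hp2 : p ≠ 2) [NeZero p]
    (n : ℕ) (hn : 1 ≤ n) (lam : Fin n → ℕ) (hlam : ∀ i, 1 ≤ lam i) (hmono : Monotone lam)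
    (H : AddSubgroup (∀ i : Fin n, ZMod (p ^ lam i)))
    (hchar : ∀ φ : AddAut (∀ i : Fin n, ZMod (p ^ lam i)), H.map φ.toAddMonoidHom = H) :
    ∃ a : Fin n → ℕ, (∀ i, a i ≤ lam i) ∧ H = R p lam a := by
  obtain ⟨a, ha, hmem⟩ :=
    characteristic_subgroup_regular' p hp hp2 n hn lam hlam hmono H hchar
  refine ⟨a, ha, ?_⟩
  ext g
  rw [hmem g]
  rfl
end
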